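/- arXiv:2510.17656 — 5 statements merged into one kernel-verified Lean document; each statement's English description precedes it below -/
import Mathlib

section
/- Let W be an L^1-graphon on K = Λ×{+,−}, let K = Ω_0 ⊔ ⊔_{i∈I} Ω_i be the decomposition of the implication digraphon →W into strong components, and let I* ⊆ I be the indices of the contradictory components. Then for each i ∈ I* there exists a measurable set Z_i ⊆ Λ such that Ω_i equals Z_i × {+,−} modulo a κ-null set. -/
open MeasureTheory ENNReal Filter Topology

noncomputable section

/-- Literals on `n` Boolean variables: a variable index together with a sign
(`true` = positive literal, `false` = negated literal). -/
abbrev Lit (n : ℕ) := Fin n × Bool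

/-- Negation of a literal. -/
def negLit {n : ℕ} (l : Lit n) : Lit n := (l.1, !l.2)

/-- The negation map on `K = Λ × Bool`. -/
def negK {Λ : Type*} (z : Λ × Bool) : Λ × Bool := (z.1, !z.2)

/-- The uniform probability measure on the two-element sign space `Bool`. -/
def boolMeasure : Measure Bool := (PMF.uniformOfFintype Bool).toMeasure

instance : IsProbabilityMeasure boolMeasure := by
  unfold boolMeasure; infer_instance

/-- The product measure `κ = λ × uniform` on `K = Λ × Bool`. -/
def kappa {Λ : Type*} [MeasurableSpace Λ] (lam : Measure Λ) : Measure (Λ × Bool) :=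
  lam.prod boolMeasure

instance {Λ : Type*} [MeasurableSpace Λ] (lam : Measure Λ) [IsProbabilityMeasure lam] :
    IsProbabilityMeasure (kappa lam) := by
  unfold kappa; infer_instance

/-- The implication digraphon `→W (x,y) = W(¬x, y)`. -/
def implKer {Λ : Type*} (W : (Λ × Bool) × (Λ × Bool) → ℝ) : (Λ × Bool) × (Λ × Bool) → ℝ :=
  fun p => W (negK p.1, p.2)

/-- Restriction `Γ⟦A⟧` of a kernel to a set: equals `Γ` on `A ×ˢ A`, `0` elsewhere. -/
def restrictKer {α : Type*} (Γ : α × α → ℝ) (A : Set α) : α × α → ℝ :=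
  (A ×ˢ A).indicator Γ

/-- Clause slots for a 2-SAT formula on `n` variables: `(i, j, q, s)` stands for the
clause `{q v_i, s v_j}`; only slots with `i < j` are used. -/
abbrev Slot (n : ℕ) := Fin n × Fin n × Bool × Bool

/-- All clause slots `(i,j,q,s)` with `i < j`. -/
def slots (n : ℕ) : Finset (Slot n) := Finset.univ.filter (fun c => c.1 < c.2.1)

/-- A 2-CNF formula (a set of clause slots) is satisfiable. -/
def SatFormula {n : ℕ} (G : Finset (Slot n)) : Prop :=
  ∃ σ : Fin n → Bool, ∀ c ∈ G, σ c.1 = c.2.2.1 ∨ σ c.2.1 = c.2.2.2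

/-- Probability of including the clause with slot `c` in `TwoSAT(n, W)` given the
sampled types `x`. -/
def clauseP {Λ : Type*} (W : (Λ × Bool) × (Λ × Bool) → ℝ) (n : ℕ) (x : Fin n → Λ)
    (c : Slot n) : ℝ :=
  min 1 (W ((x c.1, c.2.2.1), (x c.2.1, c.2.2.2)) / (2 * n))

/-- The probability, conditionally on the sampled types `x`, that the random formula
`TwoSAT(n, W)` equals exactly `G`. -/
def formulaWeight {Λ : Type*} (W : (Λ × Bool) × (Λ × Bool) → ℝ) (n : ℕ) (x : Fin n → Λ)
    (G : Finset (Slot n)) : ℝ :=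
  (∏ c ∈ G, clauseP W n x c) * ∏ c ∈ (slots n) \ G, (1 - clauseP W n x c)

/-- Probability that the random formula `TwoSAT(n, W)` satisfies the event `E`. -/
def eventProb {Λ : Type*} [MeasurableSpace Λ] (lam : Measure Λ)
    (W : (Λ × Bool) × (Λ × Bool) → ℝ) (n : ℕ) (E : Finset (Slot n) → Prop) : ℝ :=
  ∫ x : Fin n → Λ, ∑ G ∈ (slots n).powerset,
    Set.indicator {G | E G} (formulaWeight W n x) G ∂(Measure.pi fun _ => lam)

/-- Probability that the random 2-SAT formula `TwoSAT(n, W)` is satisfiable. -/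
def satProb {Λ : Type*} [MeasurableSpace Λ] (lam : Measure Λ)
    (W : (Λ × Bool) × (Λ × Bool) → ℝ) (n : ℕ) : ℝ :=
  eventProb lam W n SatFormula

/-- A set `X` of positive measure is strongly connected in the kernel `Γ`. -/
def StronglyConnectedIn {Ω : Type*} [MeasurableSpace Ω] (μ : Measure Ω)
    (Γ : Ω × Ω → ℝ) (X : Set Ω) : Prop :=
  0 < μ X ∧ ∀ A B : Set Ω, MeasurableSet A → MeasurableSet B → A ∪ B = X →
    Disjoint A B → 0 < μ A → 0 < μ B → 0 < ∫ p in A ×ˢ B, Γ p ∂(μ.prod μ)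

/-- `X` is a strong component of the kernel `Γ`. -/
def IsStrongComponent {Ω : Type*} [MeasurableSpace Ω] (μ : Measure Ω)
    (Γ : Ω × Ω → ℝ) (X : Set Ω) : Prop :=
  StronglyConnectedIn μ Γ X ∧
    ∀ Y : Set Ω, MeasurableSet Y → 0 < μ (Y ∩ X) → 0 < μ (Y \ X) →
      ¬ StronglyConnectedIn μ Γ Y

/-- `X` is fragmented in the kernel `Γ`. -/
def FragmentedIn {Ω : Type*} [MeasurableSpace Ω] (μ : Measure Ω)
    (Γ : Ω × Ω → ℝ) (X : Set Ω) : Prop :=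
  ∀ Y ⊆ X, MeasurableSet Y → ¬ StronglyConnectedIn μ Γ Y

/-- A subset of `K = Λ × Bool` is contradictory. -/
def ContradictorySet {Λ : Type*} [MeasurableSpace Λ] (lam : Measure Λ)
    (X : Set (Λ × Bool)) : Prop :=
  0 < lam {x | (x, true) ∈ X ∧ (x, false) ∈ X}

instance : Fact ((1 : ℝ≥0∞) ≤ 3) := ⟨by norm_num⟩

/-- `T` is the integral kernel operator of the kernel `Γ` on `L^p`. -/
def RepKernel {Ω : Type*} [MeasurableSpace Ω] (μ : Measure Ω) (p : ℝ≥0∞) [Fact (1 ≤ p)]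
    (Γ : Ω × Ω → ℝ) (T : Lp ℂ p μ →L[ℂ] Lp ℂ p μ) : Prop :=
  ∀ f : Lp ℂ p μ, ∀ᵐ x ∂μ, T f x = ∫ y, f y * (Γ (y, x) : ℂ) ∂μ

end


noncomputable section AuxNeg
set_option linter.unusedSectionVars false

variable {Λ : Type*} [MeasurableSpace Λ]

theorem boolMeasure_map_not : boolMeasure.map (fun b => !b) = boolMeasure := by
  unfold boolMeasure
  ext s hs
  rw [Measure.map_apply (Measurable.of_discrete) hs, PMF.toMeasure_apply _ hs,
    PMF.toMeasure_apply _ (hs.preimage Measurable.of_discrete)]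
  rw [tsum_bool, tsum_bool]
  by_cases ht : true ∈ s <;> by_cases hf : false ∈ s <;>
    simp [Set.indicator, Set.mem_preimage, ht, hf, PMF.uniformOfFintype_apply, add_comm]

theorem boolMeasure_singleton (b : Bool) : boolMeasure {b} = 2⁻¹ := by
  unfold boolMeasure
  rw [PMF.toMeasure_apply_singleton _ _ (measurableSet_singleton b), PMF.uniformOfFintype_apply]
  simp

variable {Λ : Type*} [MeasurableSpace Λ]

theorem negK_invol : Function.Involutive (negK : Λ × Bool → Λ × Bool) := by
  intro z; simp [negK]

theorem negK_meas : Measurable (negK : Λ × Bool → Λ × Bool) :=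
  measurable_fst.prodMk ((Measurable.of_discrete (f := fun b : Bool => !b)).comp measurable_snd)

theorem negK_preimage_preimage (X : Set (Λ × Bool)) :
    negK ⁻¹' (negK ⁻¹' X) = X := by
  ext z; simp [negK_invol z]

theorem negK_mp (lam : Measure Λ) [IsProbabilityMeasure lam] :
    MeasurePreserving (negK : Λ × Bool → Λ × Bool) (kappa lam) (kappa lam) := by
  have h1 : MeasurePreserving (fun b : Bool => !b) boolMeasure boolMeasure :=
    ⟨Measurable.of_discrete, boolMeasure_map_not⟩
  have h2 : MeasurePreserving (Prod.map (id : Λ → Λ) (fun b => !b))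
      (lam.prod boolMeasure) (lam.prod boolMeasure) :=
    (MeasurePreserving.id lam).prod h1
  have : (negK : Λ × Bool → Λ × Bool) = Prod.map id (fun b => !b) := rfl
  rw [this]; exact h2

/-- The reflection `(x,y) ↦ (¬y,¬x)` as a measurable equivalence. -/
def negE : (Λ × Bool) ≃ᵐ (Λ × Bool) :=
  ⟨negK_invol.toPerm, negK_meas, negK_meas⟩

def reflE : ((Λ × Bool) × (Λ × Bool)) ≃ᵐ ((Λ × Bool) × (Λ × Bool)) :=
  MeasurableEquiv.prodComm.trans (negE.prodCongr negE)

theorem reflE_apply (p : (Λ × Bool) × (Λ × Bool)) : reflE p = (negK p.2, negK p.1) := rfl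

theorem reflE_mp (lam : Measure Λ) [IsProbabilityMeasure lam] :
    MeasurePreserving (reflE : ((Λ × Bool) × (Λ × Bool)) ≃ᵐ _)
      ((kappa lam).prod (kappa lam)) ((kappa lam).prod (kappa lam)) := by
  have hs : MeasurePreserving (Prod.swap : (Λ × Bool) × (Λ × Bool) → _)
      ((kappa lam).prod (kappa lam)) ((kappa lam).prod (kappa lam)) :=
    Measure.measurePreserving_swap
  have hn := (negK_mp lam).prod (negK_mp lam)
  exact hn.comp hs

theorem key_integral (lam : Measure Λ) [IsProbabilityMeasure lam]
    (W : (Λ × Bool) × (Λ × Bool) → ℝ) (hWsymm : ∀ z w, W (z, w) = W (w, z))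
    (A B : Set (Λ × Bool)) :
    ∫ p in (negK ⁻¹' B) ×ˢ (negK ⁻¹' A), implKer W p ∂((kappa lam).prod (kappa lam)) =
      ∫ p in A ×ˢ B, implKer W p ∂((kappa lam).prod (kappa lam)) := by
  rw [← (reflE_mp lam).setIntegral_preimage_emb
    (reflE.measurableEmbedding) (implKer W) ((negK ⁻¹' B) ×ˢ (negK ⁻¹' A))]
  have hset : (reflE : _ ≃ᵐ _) ⁻¹' ((negK ⁻¹' B) ×ˢ (negK ⁻¹' A)) = A ×ˢ B := by
    ext p
    simp only [Set.mem_preimage, Set.mem_prod, reflE_apply, negK_invol p.2, negK_invol p.1]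
    exact and_comm
  have hfun : ∀ p : (Λ × Bool) × (Λ × Bool),
      implKer W (reflE p) = implKer W p := by
    intro p
    simp only [implKer, reflE_apply, negK_invol p.2]
    exact hWsymm _ _
  rw [hset]
  exact (integral_congr_ae (Filter.Eventually.of_forall fun p => hfun p)).symm |>.symm

variable {Λ : Type*} [MeasurableSpace Λ]

theorem sc_neg (lam : Measure Λ) [IsProbabilityMeasure lam]
    (W : (Λ × Bool) × (Λ × Bool) → ℝ) (hWsymm : ∀ z w, W (z, w) = W (w, z))
    (X : Set (Λ × Bool)) (hXm : MeasurableSet X)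
    (h : StronglyConnectedIn (kappa lam) (implKer W) X) :
    StronglyConnectedIn (kappa lam) (implKer W) (negK ⁻¹' X) := by
  constructor
  · rw [(negK_mp lam).measure_preimage hXm.nullMeasurableSet]; exact h.1
  · intro A B hA hB hUnion hDisj hApos hBpos
    have hA' : MeasurableSet (negK ⁻¹' B) := hB.preimage negK_meas
    have hB' : MeasurableSet (negK ⁻¹' A) := hA.preimage negK_meas
    have hU' : negK ⁻¹' B ∪ negK ⁻¹' A = X := by
      rw [← Set.preimage_union, Set.union_comm, hUnion, negK_preimage_preimage]
    have hD' : Disjoint (negK ⁻¹' B) (negK ⁻¹' A) :=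
      (hDisj.symm).preimage _
    have hAp' : 0 < kappa lam (negK ⁻¹' B) := by
      rw [(negK_mp lam).measure_preimage hB.nullMeasurableSet]; exact hBpos
    have hBp' : 0 < kappa lam (negK ⁻¹' A) := by
      rw [(negK_mp lam).measure_preimage hA.nullMeasurableSet]; exact hApos
    have := h.2 _ _ hA' hB' hU' hD' hAp' hBp'
    rwa [key_integral lam W hWsymm A B] at this

theorem main_step (lam : Measure Λ) [IsProbabilityMeasure lam]
    (W : (Λ × Bool) × (Λ × Bool) → ℝ) (hWsymm : ∀ z w, W (z, w) = W (w, z))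
    (X : Set (Λ × Bool)) (hXm : MeasurableSet X)
    (hX : IsStrongComponent (kappa lam) (implKer W) X)
    (hC : ContradictorySet lam X) :
    ∃ Z : Set Λ, MeasurableSet Z ∧
      kappa lam (symmDiff X (Z ×ˢ (Set.univ : Set Bool))) = 0 := by
  set ν := kappa lam with hν
  have hYm : MeasurableSet (negK ⁻¹' X) := hXm.preimage negK_meas
  -- the contradictory core
  set C : Set Λ := {x | (x, true) ∈ X ∧ (x, false) ∈ X} with hCdef
  have hCpos : 0 < lam C := hC
  -- C ×ˢ {true} ⊆ (negK⁻¹' X) ∩ X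
  have hsub : C ×ˢ ({true} : Set Bool) ⊆ (negK ⁻¹' X) ∩ X := by
    rintro ⟨x, b⟩ ⟨hx, hb⟩
    simp only [Set.mem_singleton_iff] at hb
    subst hb
    exact ⟨by simpa [negK] using hx.2, hx.1⟩
  have hinter : 0 < ν ((negK ⁻¹' X) ∩ X) := by
    refine lt_of_lt_of_le ?_ (measure_mono hsub)
    rw [hν, kappa, Measure.prod_prod, boolMeasure_singleton]
    exact ENNReal.mul_pos hCpos.ne' (by simp)
  -- maximality: negK⁻¹' X \ X is null
  have hdiff1 : ν ((negK ⁻¹' X) \ X) = 0 := by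
    by_contra h
    have hpos : 0 < ν ((negK ⁻¹' X) \ X) := pos_iff_ne_zero.mpr h
    exact hX.2 _ hYm hinter hpos (sc_neg lam W hWsymm X hXm hX.1)
  have hdiff2 : ν (X \ (negK ⁻¹' X)) = 0 := by
    have hset : X \ (negK ⁻¹' X) = negK ⁻¹' ((negK ⁻¹' X) \ X) := by
      ext z
      simp only [Set.mem_diff, Set.mem_preimage, negK_invol z]
    rw [hset, (negK_mp lam).measure_preimage (hYm.diff hXm).nullMeasurableSet]
    exact hdiff1
  refine ⟨{x | (x, true) ∈ X}, hXm.preimage measurable_prodMk_right, ?_⟩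
  have hsub2 : symmDiff X ({x | (x, true) ∈ X} ×ˢ (Set.univ : Set Bool)) ⊆
      (X \ (negK ⁻¹' X)) ∪ ((negK ⁻¹' X) \ X) := by
    rintro ⟨x, b⟩ hz
    rw [Set.mem_symmDiff] at hz
    cases b
    · -- b = false : membership in product ↔ (x,true) ∈ X ↔ z ∈ negK⁻¹' X
      have hiff : ((x, false) ∈ {x | (x, true) ∈ X} ×ˢ (Set.univ : Set Bool)) ↔
          ((x, false) ∈ negK ⁻¹' X) := by
        simp [Set.mem_prod, negK]
      rcases hz with ⟨h1, h2⟩ | ⟨h1, h2⟩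
      · exact Or.inl ⟨h1, fun hh => h2 (hiff.mpr hh)⟩
      · exact Or.inr ⟨hiff.mp h1, h2⟩
    · -- b = true : impossible
      exfalso
      rcases hz with ⟨h1, h2⟩ | ⟨h1, h2⟩
      · exact h2 ⟨h1, Set.mem_univ _⟩
      · exact h2 h1.1
  refine measure_mono_null hsub2 ?_
  exact measure_union_null hdiff2 hdiff1

end AuxNeg

/-- Every contradictory strong component of the implication digraphon
of an `L¹`-graphon is, modulo a null set, of the form `Z × {+,−}`. -/
theorem contradictory_component_is_product
    {Λ : Type*} [MeasurableSpace Λ] [TopologicalSpace Λ] [PolishSpace Λ] [BorelSpace Λ]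
    (lam : Measure Λ) [IsProbabilityMeasure lam]
    (W : (Λ × Bool) × (Λ × Bool) → ℝ)
    (hWmeas : Measurable W)
    (hWnonneg : ∀ z, 0 ≤ W z)
    (hWsymm : ∀ z w, W (z, w) = W (w, z))
    (hW1 : MemLp W 1 ((kappa lam).prod (kappa lam)))
    -- a decomposition of the implication digraphon `→W` into strong components
    (I : Type) [Countable I]
    (Om0 : Set (Λ × Bool)) (Om : I → Set (Λ × Bool))
    (hOm0meas : MeasurableSet Om0) (hOmmeas : ∀ i, MeasurableSet (Om i))
    (hcover : Om0 ∪ (⋃ i, Om i) = Set.univ)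
    (hdisj : Pairwise (Function.onFun Disjoint Om))
    (hdisj0 : ∀ i, Disjoint Om0 (Om i))
    (hfrag : Om0 = ∅ ∨ FragmentedIn (kappa lam) (implKer W) Om0)
    (hcomp : ∀ i, IsStrongComponent (kappa lam) (implKer W) (Om i)) :
    ∀ i, ContradictorySet lam (Om i) →
      ∃ Z : Set Λ, MeasurableSet Z ∧
        kappa lam (symmDiff (Om i) (Z ×ˢ (Set.univ : Set Bool))) = 0 := by
  intro i hcontra
  exact main_step lam W hWsymm (Om i) (hOmmeas i) (hcomp i) hcontra
end

section
/- Suppose φ is an unsatisfiable 2-CNF formula on variables v_1,…,v_n. Then the implication digraph ImplDig(φ) contains a basis u_1,…,u_k of a (k,a,b)-bicycle (for some k ≥ 2, 2 ≤ a ≤ k, 1 ≤ b ≤ k−1) all of whose edges, together with the two extra edges (¬u_a, u_1) and (u_k, ¬u_b), are edges of a single contradictory directed cycle of ImplDig(φ). -/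
noncomputable section

/-- The implication digraph of a 2-CNF formula: for each clause `{l₁, l₂}` it contains
the directed edges `(¬l₁, l₂)` and `(¬l₂, l₁)`. -/
def implEdges {n : ℕ} (φ : Finset (Lit n × Lit n)) : Finset (Lit n × Lit n) :=
  φ.image (fun c => (negLit c.1, c.2)) ∪ φ.image (fun c => (negLit c.2, c.1))

/-- A 2-CNF formula is satisfiable: a literal `(i, s)` is true under an assignment `σ`
iff `σ i = s`, and every clause must contain a true literal. -/
def Satisfiable2CNF {n : ℕ} (φ : Finset (Lit n × Lit n)) : Prop :=
  ∃ σ : Fin n → Bool, ∀ c ∈ φ, σ c.1.1 = c.1.2 ∨ σ c.2.1 = c.2.2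

namespace BP

variable {n : ℕ} {φ : Finset (Lit n × Lit n)}

@[simp] lemma negLit_negLit (l : Lit n) : negLit (negLit l) = l := by
  simp [negLit]

lemma negLit_fst (l : Lit n) : (negLit l).1 = l.1 := rfl

lemma negLit_ne (l : Lit n) : negLit l ≠ l := by
  rcases l with ⟨i, s⟩
  simp [negLit, Prod.ext_iff]

lemma negLit_inj {a b : Lit n} (h : negLit a = negLit b) : a = b := by
  have := congrArg negLit h
  simpa using this

lemma eq_negLit_of_fst_eq {a b : Lit n} (hne : a ≠ b) (h : a.1 = b.1) : a = negLit b := by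
  have h2 : a.2 ≠ b.2 := fun hb => hne (Prod.ext h hb)
  have h3 : a.2 = !b.2 := by
    cases hb : b.2 <;> cases ha : a.2 <;> simp_all
  exact Prod.ext h h3

lemma edge_symm {a b : Lit n} (h : (a, b) ∈ implEdges φ) :
    (negLit b, negLit a) ∈ implEdges φ := by
  unfold implEdges at h ⊢
  rw [Finset.mem_union] at h ⊢
  rcases h with h | h <;> rw [Finset.mem_image] at h <;> obtain ⟨c, hc, hce⟩ := h <;>
    rw [Prod.mk.injEq] at hce
  · right
    rw [Finset.mem_image]
    refine ⟨c, hc, ?_⟩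
    rw [Prod.mk.injEq]
    constructor
    · rw [← hce.2]
    · rw [← hce.1, negLit_negLit]
  · left
    rw [Finset.mem_image]
    refine ⟨c, hc, ?_⟩
    rw [Prod.mk.injEq]
    constructor
    · rw [← hce.2]
    · rw [← hce.1, negLit_negLit]

lemma edge_fst_ne (hvars : ∀ c ∈ φ, c.1.1 ≠ c.2.1) {a b : Lit n}
    (h : (a, b) ∈ implEdges φ) : a.1 ≠ b.1 := by
  unfold implEdges at h
  rw [Finset.mem_union] at h
  rcases h with h | h <;> rw [Finset.mem_image] at h <;> obtain ⟨c, hc, hce⟩ := h <;>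
    rw [Prod.mk.injEq] at hce
  · rw [← hce.1, ← hce.2, negLit_fst]
    exact hvars c hc
  · rw [← hce.1, ← hce.2, negLit_fst]
    exact (hvars c hc).symm

/-- Walks in the implication digraph: `Wk φ a b l` means `l` is the list of vertices
visited after `a`, ending at `b`. -/
inductive Wk (φ : Finset (Lit n × Lit n)) : Lit n → Lit n → List (Lit n) → Prop
  | nil (a : Lit n) : Wk φ a a []
  | cons {a b c : Lit n} {l : List (Lit n)} (h : (a, b) ∈ implEdges φ) (w : Wk φ b c l) :
      Wk φ a c (b :: l)

namespace Wk

lemma last_mem {a b : Lit n} {l : List (Lit n)} (w : Wk φ a b l) : b ∈ a :: l := by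
  induction w with
  | nil a => simp
  | cons h w ih => simpa using Or.inr (by simpa using ih)

lemma append {a b c : Lit n} {l₁ l₂ : List (Lit n)} (w₁ : Wk φ a b l₁) (w₂ : Wk φ b c l₂) :
    Wk φ a c (l₁ ++ l₂) := by
  induction w₁ with
  | nil a => simpa
  | cons h w ih => exact .cons h (ih w₂)

lemma snoc {a b c : Lit n} {l : List (Lit n)} (w : Wk φ a b l) (h : (b, c) ∈ implEdges φ) :
    Wk φ a c (l ++ [c]) :=
  w.append (.cons h (.nil c))

lemma eq_of_nil {a b : Lit n} (w : Wk φ a b []) : a = b := by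
  cases w; rfl

lemma ne_nil {a b : Lit n} {l : List (Lit n)} (w : Wk φ a b l) (hab : a ≠ b) : l ≠ [] := by
  intro h; subst h; exact hab w.eq_of_nil

lemma split {a c v : Lit n} {l : List (Lit n)} (w : Wk φ a c l) (hv : v ∈ a :: l) :
    ∃ l₁ l₂, l = l₁ ++ l₂ ∧ Wk φ a v l₁ ∧ Wk φ v c l₂ := by
  induction w with
  | nil a =>
    simp only [List.mem_singleton] at hv
    subst hv
    exact ⟨[], [], rfl, Wk.nil _, Wk.nil _⟩
  | cons h w ih =>
    rename_i a b c l
    rcases List.mem_cons.mp hv with h' | hv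
    · subst h'
      exact ⟨[], b :: l, rfl, Wk.nil _, Wk.cons h w⟩
    · obtain ⟨l₁, l₂, rfl, w₁, w₂⟩ := ih hv
      exact ⟨b :: l₁, l₂, rfl, .cons h w₁, w₂⟩

lemma shortcut {a b : Lit n} {l : List (Lit n)} (w : Wk φ a b l) (hnd : ¬ (a :: l).Nodup) :
    ∃ l', Wk φ a b l' ∧ l'.length < l.length := by
  induction w with
  | nil a => simp at hnd
  | cons h w ih =>
    rename_i a b c l
    rw [List.nodup_cons] at hnd
    push_neg at hnd
    by_cases ha : a ∈ b :: l
    · obtain ⟨l₁, l₂, rfl, w₁, w₂⟩ := w.split ha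
      refine ⟨l₂, w₂, ?_⟩
      simp [List.length_append]
    · obtain ⟨l', w', hl'⟩ := ih (hnd ha)
      exact ⟨b :: l', .cons h w', by simpa using hl'⟩

lemma negrev {a b : Lit n} {l : List (Lit n)} (w : Wk φ a b l) :
    ∃ l', Wk φ (negLit b) (negLit a) l' ∧ l'.length = l.length ∧
      ∀ v, v ∈ negLit b :: l' ↔ negLit v ∈ a :: l := by
  induction w with
  | nil a =>
    refine ⟨[], .nil _, rfl, fun v => ?_⟩
    simp only [List.mem_singleton]
    constructor
    · rintro rfl; simp
    · intro h; rw [← h, negLit_negLit]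
  | cons h w ih =>
    rename_i a b c l
    obtain ⟨l', w', hlen, hmem⟩ := ih
    refine ⟨l' ++ [negLit a], w'.snoc (edge_symm h), by simp [hlen], fun v => ?_⟩
    have hv : v = negLit a ↔ negLit v = a := by
      constructor
      · rintro rfl; simp
      · intro h'; rw [← h', negLit_negLit]
    constructor
    · intro hm
      rcases List.mem_cons.mp hm with h' | hm'
      · have : v ∈ negLit c :: l' := by rw [h']; exact List.mem_cons_self
        exact List.mem_cons_of_mem _ ((hmem v).mp this)
      · rcases List.mem_append.mp hm' with h' | h'
        · exact List.mem_cons_of_mem _ ((hmem v).mp (List.mem_cons_of_mem _ h'))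
        · simp only [List.mem_singleton] at h'
          have : negLit v = a := hv.mp h'
          rw [this] at *
          exact List.mem_cons_self
    · intro hm
      rcases List.mem_cons.mp hm with h' | h'
      · have : v = negLit a := hv.mpr h'
        subst this
        exact List.mem_cons_of_mem _ (List.mem_append.mpr (Or.inr (by simp)))
      · have := (hmem v).mpr h'
        rcases List.mem_cons.mp this with h'' | h''
        · rw [h'']
          exact List.mem_cons_self
        · exact List.mem_cons_of_mem _ (List.mem_append.mpr (Or.inl h''))

lemma chain {a b : Lit n} {l : List (Lit n)} (w : Wk φ a b l) :
    List.Chain (fun x y => (x, y) ∈ implEdges φ) a l := by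
  induction w with
  | nil a => exact .nil
  | cons h w ih => exact .cons h ih

lemma getLast_eq {a b : Lit n} {l : List (Lit n)} (w : Wk φ a b l) :
    (a :: l).getLast (List.cons_ne_nil _ _) = b := by
  induction w with
  | nil a => rfl
  | cons h w ih =>
    rename_i a b c l
    rw [List.getLast_cons (List.cons_ne_nil _ _)]
    exact ih

lemma singleton_inv {a b x : Lit n} (w : Wk φ a b [x]) :
    x = b ∧ (a, b) ∈ implEdges φ := by
  cases w with
  | cons h w' =>
    have hx := w'.eq_of_nil
    subst hx
    exact ⟨rfl, h⟩

lemma two_le_length (hvars : ∀ c ∈ φ, c.1.1 ≠ c.2.1) {a : Lit n} {l : List (Lit n)}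
    (w : Wk φ a (negLit a) l) : 2 ≤ l.length := by
  rcases l with _ | ⟨x, _ | ⟨y, l⟩⟩
  · exact absurd w.eq_of_nil (negLit_ne a).symm
  · obtain ⟨-, h⟩ := w.singleton_inv
    exact absurd (negLit_fst a).symm (edge_fst_ne hvars h)
  · simp

end Wk

/-- From a closed walk through `u` and `v`, extract walks `u → v` and `v → u`
with total length equal to that of the closed walk. -/
lemma closed_pair {z u v : Lit n} {l : List (Lit n)} (w : Wk φ z z l)
    (hu : u ∈ z :: l) (hv : v ∈ z :: l) :
    ∃ l₁ l₂, Wk φ u v l₁ ∧ Wk φ v u l₂ ∧ l₁.length + l₂.length = l.length := by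
  obtain ⟨m₁, m₂, rfl, w₁, w₂⟩ := w.split hu
  have wu : Wk φ u u (m₂ ++ m₁) := w₂.append w₁
  have hv' : v ∈ u :: (m₂ ++ m₁) := by
    rcases List.mem_cons.mp hv with rfl | hv
    · rcases List.mem_cons.mp w₂.last_mem with rfl | h
      · simp
      · exact List.mem_cons_of_mem _ (List.mem_append.mpr (Or.inl h))
    · rcases List.mem_append.mp hv with h | h
      · exact List.mem_cons_of_mem _ (List.mem_append.mpr (Or.inr h))
      · exact List.mem_cons_of_mem _ (List.mem_append.mpr (Or.inl h))
  obtain ⟨k₁, k₂, hk, wk₁, wk₂⟩ := wu.split hv'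
  refine ⟨k₁, k₂, wk₁, wk₂, ?_⟩
  have := congrArg List.length hk
  simp only [List.length_append] at this ⊢
  omega

/-- Reachability in the implication digraph. -/
def Reach (φ : Finset (Lit n × Lit n)) : Lit n → Lit n → Prop :=
  Relation.ReflTransGen (fun a b => (a, b) ∈ implEdges φ)

lemma reach_wk {a b : Lit n} (h : Reach φ a b) : ∃ l, Wk φ a b l := by
  induction h with
  | refl => exact ⟨[], Wk.nil a⟩
  | tail _ he ih =>
    obtain ⟨l, w⟩ := ih
    exact ⟨l ++ [_], w.snoc he⟩


open Fin.CommRing in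
set_option maxHeartbeats 1000000 in
lemma bicycle_of_cycle (hvars : ∀ c ∈ φ, c.1.1 ≠ c.2.1) {m : ℕ} (w : Fin (m + 2) → Lit n)
    (hinj : Function.Injective w)
    (hedge : ∀ t : Fin (m + 2), (w t, w (t + 1)) ∈ implEdges φ)
    (hcon : ∃ s t : Fin (m + 2), w t = negLit (w s)) :
    ∃ (k : ℕ) (u : Fin (k + 2) → Lit n) (α β : Fin (k + 2)),
      Function.Injective (fun t => (u t).1) ∧
      1 ≤ (α : ℕ) ∧ (β : ℕ) ≤ k ∧
      (∀ t : Fin (k + 1), (u t.castSucc, u t.succ) ∈ implEdges φ) ∧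
      (negLit (u α), u 0) ∈ implEdges φ ∧
      (u (Fin.last (k + 1)), negLit (u β)) ∈ implEdges φ ∧
      (∀ t : Fin (k + 1), ∃ s : Fin (m + 2), (u t.castSucc, u t.succ) = (w s, w (s + 1))) ∧
      (∃ s : Fin (m + 2), (negLit (u α), u 0) = (w s, w (s + 1))) ∧
      (∃ s : Fin (m + 2), (u (Fin.last (k + 1)), negLit (u β)) = (w s, w (s + 1))) := by
  classical
  obtain ⟨N, hN⟩ : ∃ N, N = m + 2 := ⟨m + 2, rfl⟩
  let v : ℕ → Lit n := fun i => w (i : Fin (m + 2))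
  have hcast1 : ∀ x : ℕ, ((x + 1 : ℕ) : Fin (m + 2)) = (x : Fin (m + 2)) + 1 := by
    intro x; push_cast; ring
  have hvedge : ∀ i : ℕ, (v i, v (i + 1)) ∈ implEdges φ := by
    intro i
    have := hedge (i : Fin (m + 2))
    simpa only [v, hcast1 i] using this
  have hvarne : ∀ i : ℕ, (v i).1 ≠ (v (i + 1)).1 := fun i => edge_fst_ne hvars (hvedge i)
  have hvper : ∀ i : ℕ, v (i + N) = v i := by
    intro i
    show w _ = w _
    congr 1
    rw [hN, Nat.cast_add, Fin.natCast_self, add_zero]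
  have hcastinj : ∀ p x y : ℕ, x < N → y < N → v (p + x) = v (p + y) → x = y := by
    intro p x y hx hy h
    have h1 : ((p + x : ℕ) : Fin (m + 2)) = ((p + y : ℕ) : Fin (m + 2)) := hinj h
    push_cast at h1
    have h2 : ((x : ℕ) : Fin (m + 2)) = ((y : ℕ) : Fin (m + 2)) := add_left_cancel h1
    have h3 := congrArg Fin.val h2
    rwa [Fin.val_natCast, Fin.val_natCast, Nat.mod_eq_of_lt (by omega), Nat.mod_eq_of_lt
      (by omega)] at h3
  have hwit : ∀ x : ℕ, ∃ s : Fin (m + 2), (v x, v (x + 1)) = (w s, w (s + 1)) := by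
    intro x
    refine ⟨(x : Fin (m + 2)), ?_⟩
    have : v (x + 1) = w ((x : Fin (m + 2)) + 1) := by
      show w _ = w _
      rw [hcast1]
    rw [this]
  -- the maximal length of a variable-injective arc
  set VarInj : ℕ → ℕ → Prop :=
    fun p r => ∀ i < r, ∀ j < r, (v (p + i)).1 = (v (p + j)).1 → i = j with hVarInj
  set P : ℕ → Prop := fun r => ∃ p, VarInj p r with hP
  have hP2 : P 2 := by
    refine ⟨0, fun i hi j hj h => ?_⟩
    simp only [Nat.zero_add] at h
    interval_cases i <;> interval_cases j
    · rfl
    · exact absurd h (hvarne 0)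
    · exact absurd h.symm (hvarne 0)
    · rfl
  have hPN : ¬ P N := by
    rintro ⟨p, hp⟩
    obtain ⟨s, t, hst⟩ := hcon
    have hts : t ≠ s := by
      intro h
      rw [h] at hst
      exact (negLit_ne (w s)) hst.symm
    have key : ∀ z : Fin (m + 2), v (p + ((z - (p : Fin (m + 2))) : Fin (m + 2)).val) = w z := by
      intro z
      show w _ = w _
      congr 1
      push_cast
      exact add_sub_cancel _ _
    have hfst : (v (p + ((t - (p : Fin (m + 2))) : Fin (m + 2)).val)).1
        = (v (p + ((s - (p : Fin (m + 2))) : Fin (m + 2)).val)).1 := by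
      rw [key t, key s, hst, negLit_fst]
    have hlt1 : ((t - (p : Fin (m + 2))) : Fin (m + 2)).val < m + 2 := Fin.is_lt _
    have hlt2 : ((s - (p : Fin (m + 2))) : Fin (m + 2)).val < m + 2 := Fin.is_lt _
    have := hp _ (by omega) _ (by omega) hfst
    have h2 : (t - (p : Fin (m + 2))) = (s - (p : Fin (m + 2))) := Fin.val_injective this
    exact hts (by
      have := congrArg (· + (p : Fin (m + 2))) h2
      simpa using this)
  have hNpos : 2 ≤ N := by omega
  set r := Nat.findGreatest P N with hr
  have hr2 : 2 ≤ r := Nat.le_findGreatest hNpos hP2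
  have hrN : r ≤ N := Nat.findGreatest_le N
  have hrP : P r := Nat.findGreatest_spec hNpos hP2
  have hrne : r ≠ N := fun h => hPN (h ▸ hrP)
  have hmax : ¬ P (r + 1) := Nat.findGreatest_is_greatest (P := P) (n := N) (by omega) (by omega)
  obtain ⟨p, hp⟩ := hrP
  obtain ⟨k, hk⟩ : ∃ k, r = k + 2 := ⟨r - 2, by omega⟩
  have hshift : ∀ i : ℕ, v (p + (N - 1) + (i + 1)) = v (p + i) := by
    intro i
    have heq : p + (N - 1) + (i + 1) = (p + i) + N := by omega
    rw [heq, hvper]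
  -- backward extension is blocked
  have hqex : ∃ q, 1 ≤ q ∧ q < r ∧ v (p + (N - 1)) = negLit (v (p + q)) := by
    have hnb : ¬ VarInj (p + (N - 1)) (r + 1) := fun h => hmax ⟨_, h⟩
    simp only [hVarInj] at hnb
    push_neg at hnb
    obtain ⟨i, hi, j, hj, heq, hne⟩ := hnb
    have hzero : ∃ q, q < r ∧ (v (p + (N - 1))).1 = (v (p + q)).1 := by
      rcases Nat.eq_zero_or_pos i with hi0 | hi0
      · rcases Nat.eq_zero_or_pos j with hj0 | hj0
        · exact absurd (hi0.trans hj0.symm) hne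
        · refine ⟨j - 1, by omega, ?_⟩
          have hj' : j = (j - 1) + 1 := by omega
          rw [hi0] at heq
          rw [hj'] at heq
          rw [hshift (j - 1)] at heq
          simpa using heq
      · rcases Nat.eq_zero_or_pos j with hj0 | hj0
        · refine ⟨i - 1, by omega, ?_⟩
          have hi' : i = (i - 1) + 1 := by omega
          rw [hj0] at heq
          rw [hi'] at heq
          rw [hshift (i - 1)] at heq
          simpa using heq.symm
        · exfalso
          have hi' : i = (i - 1) + 1 := by omega
          have hj' : j = (j - 1) + 1 := by omega
          rw [hi', hshift (i - 1), hj', hshift (j - 1)] at heq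
          have := hp (i - 1) (by omega) (j - 1) (by omega) heq
          omega
    obtain ⟨q, hqr, hq⟩ := hzero
    have hq1 : 1 ≤ q := by
      by_contra hq0
      have hq0' : q = 0 := by omega
      subst hq0'
      have : v (p + 0) = v (p + (N - 1) + 1) := by
        have := hshift 0
        simpa using this.symm
      rw [Nat.add_zero] at this hq
      rw [this] at hq
      exact hvarne (p + (N - 1)) hq
    have hne' : v (p + (N - 1)) ≠ v (p + q) := by
      intro h
      have := hcastinj p (N - 1) q (by omega) (by omega) h
      omega
    exact ⟨q, hq1, hqr, eq_negLit_of_fst_eq hne' hq⟩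
  obtain ⟨q, hq1, hqr, hback⟩ := hqex
  -- forward extension is blocked
  have hiex : ∃ i, i < r ∧ i ≠ r - 1 ∧ v (p + r) = negLit (v (p + i)) := by
    have hnf : ¬ VarInj p (r + 1) := fun h => hmax ⟨_, h⟩
    simp only [hVarInj] at hnf
    push_neg at hnf
    obtain ⟨i, hi, j, hj, heq, hne⟩ := hnf
    have hzero : ∃ i', i' < r ∧ (v (p + i')).1 = (v (p + r)).1 := by
      by_cases hir : i = r
      · by_cases hjr : j = r
        · exact absurd (hir.trans hjr.symm) hne
        · exact ⟨j, by omega, by rw [← hir]; exact heq.symm⟩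
      · by_cases hjr : j = r
        · exact ⟨i, by omega, by rw [← hjr]; exact heq⟩
        · exact absurd (hp i (by omega) j (by omega) heq) hne
    obtain ⟨i', hir, hieq⟩ := hzero
    have hir1 : i' ≠ r - 1 := by
      intro h
      have harr : p + (r - 1) + 1 = p + r := by omega
      have := hvarne (p + (r - 1))
      rw [harr] at this
      rw [h] at hieq
      exact this hieq
    have hne'' : v (p + r) ≠ v (p + i') := by
      intro h
      have := hcastinj p r i' (by omega) (by omega) h
      omega
    exact ⟨i', hir, hir1, eq_negLit_of_fst_eq hne'' hieq.symm⟩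
  obtain ⟨i, hir, hir1, hfwd⟩ := hiex
  refine ⟨k, fun j => v (p + (j : ℕ)), ⟨q, by omega⟩, ⟨i, by omega⟩, ?_, by simpa using hq1,
    by simp; omega, ?_, ?_, ?_, ?_, ?_, ?_⟩
  · intro t1 t2 h
    simp only at h
    have := hp t1.val (by omega) t2.val (by omega) h
    exact Fin.ext this
  · intro t
    simp only [Fin.coe_castSucc, Fin.val_succ, ← Nat.add_assoc]
    exact hvedge (p + t.val)
  · show (negLit (v (p + q)), v (p + 0)) ∈ implEdges φ
    rw [← hback, Nat.add_zero]
    have := hvedge (p + (N - 1))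
    have harr : p + (N - 1) + 1 = p + N := by omega
    rw [harr, hvper] at this
    exact this
  · show (v (p + (Fin.last (k + 1)).val), negLit (v (p + i))) ∈ implEdges φ
    rw [← hfwd]
    have := hvedge (p + (k + 1))
    have harr : p + (k + 1) + 1 = p + r := by omega
    rw [harr] at this
    simpa using this
  · intro t
    simp only [Fin.coe_castSucc, Fin.val_succ, ← Nat.add_assoc]
    exact hwit (p + t.val)
  · show ∃ s, (negLit (v (p + q)), v p) = (w s, w (s + 1))
    rw [← hback]
    have := hwit (p + (N - 1))
    have harr : p + (N - 1) + 1 = p + N := by omega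
    rw [harr, hvper] at this
    exact this
  · show ∃ s, (v (p + (Fin.last (k + 1)).val), negLit (v (p + i))) = (w s, w (s + 1))
    rw [← hfwd]
    have := hwit (p + (k + 1))
    have harr : p + (k + 1) + 1 = p + r := by omega
    rw [harr] at this
    simpa using this

end BP


/-- Type synonym for literals carrying the reachability preorder of `φ`. -/
def LitR (n : ℕ) (_φ : Finset (Lit n × Lit n)) := Lit n

instance {n : ℕ} (φ : Finset (Lit n × Lit n)) : Preorder (LitR n φ) where
  le a b := BP.Reach φ a b
  le_refl a := Relation.ReflTransGen.refl
  le_trans a b c hab hbc := Relation.ReflTransGen.trans hab hbc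

namespace BP

variable {n : ℕ} {φ : Finset (Lit n × Lit n)}

lemma exists_contra (hunsat : ¬ Satisfiable2CNF φ) :
    ∃ x : Lit n, Reach φ x (negLit x) ∧ Reach φ (negLit x) x := by
  by_contra hcon
  push_neg at hcon
  apply hunsat
  classical
  let q : Lit n → LinearExtension (Antisymmetrization (LitR n φ) (· ≤ ·)) :=
    fun l => toLinearExtension (@toAntisymmetrization (LitR n φ) (· ≤ ·) _ l)
  have hmono : ∀ a b : Lit n, Reach φ a b → q a ≤ q b := by
    intro a b h
    exact toLinearExtension.monotone
      ((toAntisymmetrization_le_toAntisymmetrization_iff (α := LitR n φ) (a := a) (b := b)).mpr h)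
  have hanti : ∀ a b : Lit n, q a ≤ q b → q b ≤ q a → Reach φ a b ∧ Reach φ b a := by
    intro a b h1 h2
    have h3 : q a = q b := le_antisymm h1 h2
    have h4 : @toAntisymmetrization (LitR n φ) (· ≤ ·) _ a =
        @toAntisymmetrization (LitR n φ) (· ≤ ·) _ b := h3
    have h5 := Quotient.exact' h4
    exact ⟨h5.1, h5.2⟩
  refine ⟨fun i => decide (q (i, false) < q (i, true)), fun c hc => ?_⟩
  by_contra hns
  push_neg at hns
  obtain ⟨h1, h2⟩ := hns
  have key : ∀ l : Lit n, (decide (q (l.1, false) < q (l.1, true)) : Bool) ≠ l.2 →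
      q l ≤ q (negLit l) := by
    intro l hl
    rcases l with ⟨i, s⟩
    cases s
    · simp only [decide_eq_false_iff_not] at hl
      · have : q (i, false) < q (i, true) := by
          by_contra hq
          exact hl (by simp [hq])
        exact le_of_lt (by simpa [negLit] using this)
    · have : ¬ q (i, false) < q (i, true) := by
        intro hq
        exact hl (by simp [hq])
      have := not_lt.mp this
      simpa [negLit] using this
  have e1 : Reach φ (negLit c.1) c.2 := by
    apply Relation.ReflTransGen.single
    unfold implEdges
    exact Finset.mem_union_left _ (Finset.mem_image_of_mem _ hc)
  have e2 : Reach φ (negLit c.2) c.1 := by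
    apply Relation.ReflTransGen.single
    unfold implEdges
    exact Finset.mem_union_right _ (Finset.mem_image_of_mem _ hc)
  have k1 : q c.1 ≤ q (negLit c.1) := key c.1 h1
  have k2 : q c.2 ≤ q (negLit c.2) := key c.2 h2
  have chain1 : q c.1 ≤ q (negLit c.1) := k1
  have chain2 : q (negLit c.1) ≤ q c.2 := hmono _ _ e1
  have chain3 : q c.2 ≤ q (negLit c.2) := k2
  have chain4 : q (negLit c.2) ≤ q c.1 := hmono _ _ e2
  have hAB : q c.1 ≤ q (negLit c.1) := chain1
  have hBA : q (negLit c.1) ≤ q c.1 := le_trans chain2 (le_trans chain3 chain4)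
  obtain ⟨r1, r2⟩ := hanti _ _ hAB hBA
  exact hcon c.1 r1 r2

/-- From a closed walk `Wk φ z z l`, the list `z :: l.dropLast` is a "cycle list":
consecutive edges plus an edge from its last element back to its head `z`. -/
lemma cycle_of_closed {z : Lit n} {l : List (Lit n)} (w : Wk φ z z l) (hl : l ≠ []) :
    List.Chain' (fun a b => (a, b) ∈ implEdges φ) (z :: l.dropLast) ∧
      ((z :: l.dropLast).getLast (List.cons_ne_nil _ _), z) ∈ implEdges φ := by
  have hlast : l.getLast hl = z := by
    have := w.getLast_eq
    rwa [List.getLast_cons hl] at this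
  have hdecomp : l = l.dropLast ++ [z] := by
    conv_lhs => rw [← List.dropLast_append_getLast hl]
    rw [hlast]
  have hchain : List.Chain' (fun a b => (a, b) ∈ implEdges φ) (z :: l) := w.chain
  rw [hdecomp] at hchain
  have : (z :: (l.dropLast ++ [z])) = (z :: l.dropLast) ++ [z] := by simp
  rw [this] at hchain
  simp only [List.Chain'] at hchain
  rw [List.isChain_append] at hchain
  obtain ⟨h1, -, h3⟩ := hchain
  refine ⟨h1, ?_⟩
  exact h3 _ (List.getLast?_eq_getLast_of_ne_nil (List.cons_ne_nil _ _)) z rfl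

lemma getLast_not_mem_dropLast {l : List (Lit n)} (hnd : l.Nodup) (hl : l ≠ []) :
    l.getLast hl ∉ l.dropLast := by
  intro hmem
  have hd := List.dropLast_append_getLast hl
  rw [← hd] at hnd
  rw [List.nodup_append] at hnd
  exact hnd.2.2 _ hmem _ (by simp) rfl

set_option maxHeartbeats 1000000 in
/-- Main combinatorial lemma: an unsatisfiable 2-CNF has a simple contradictory cycle. -/
lemma exists_contra_cycle (hvars : ∀ c ∈ φ, c.1.1 ≠ c.2.1) (hunsat : ¬ Satisfiable2CNF φ) :
    ∃ (C : List (Lit n)) (y : Lit n), C.Nodup ∧ 4 ≤ C.length ∧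
      List.Chain' (fun a b => (a, b) ∈ implEdges φ) C ∧
      (∀ h : C ≠ [], (C.getLast h, C.head h) ∈ implEdges φ) ∧
      y ∈ C ∧ negLit y ∈ C := by
  classical
  have hT : ∃ d : ℕ, ∃ (z : Lit n) (l₁ l₂ : List (Lit n)),
      Wk φ z (negLit z) l₁ ∧ Wk φ (negLit z) z l₂ ∧ l₁.length + l₂.length = d := by
    obtain ⟨x, h1, h2⟩ := exists_contra hunsat
    obtain ⟨l₁, w₁⟩ := reach_wk h1
    obtain ⟨l₂, w₂⟩ := reach_wk h2
    exact ⟨_, x, l₁, l₂, w₁, w₂, rfl⟩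
  set M := Nat.find hT with hM
  obtain ⟨x, l₁, l₂, w₁, w₂, hsum⟩ := Nat.find_spec hT
  have min_lt : ∀ d < M, ¬ ∃ (z : Lit n) (l₁ l₂ : List (Lit n)),
      Wk φ z (negLit z) l₁ ∧ Wk φ (negLit z) z l₂ ∧ l₁.length + l₂.length = d :=
    fun d hd => Nat.find_min hT hd
  -- all walks realizing the minimum are vertex-simple
  have nodup_of_min : ∀ (z : Lit n) (m₁ m₂ : List (Lit n)),
      Wk φ z (negLit z) m₁ → Wk φ (negLit z) z m₂ → m₁.length + m₂.length = M →
      (z :: m₁).Nodup ∧ (negLit z :: m₂).Nodup := by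
    intro z m₁ m₂ u₁ u₂ hs
    constructor
    · by_contra hnd
      obtain ⟨l', w', hlt⟩ := u₁.shortcut hnd
      exact min_lt (l'.length + m₂.length) (by omega) ⟨z, l', m₂, w', u₂, rfl⟩
    · by_contra hnd
      obtain ⟨l', w', hlt⟩ := u₂.shortcut hnd
      exact min_lt (m₁.length + l'.length) (by omega) ⟨z, m₁, l', u₁, w', rfl⟩
  -- a contradictory closed walk shorter than M is impossible
  have pair_walks : ∀ (z v : Lit n) (l : List (Lit n)), Wk φ z z l →
      v ∈ z :: l → negLit v ∈ z :: l → l.length < M → False := by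
    intro z v l w hv hnv hlen
    obtain ⟨k₁, k₂, wk₁, wk₂, hk⟩ := closed_pair w hv hnv
    exact min_lt (k₁.length + k₂.length) (by omega) ⟨v, k₁, k₂, wk₁, wk₂, rfl⟩
  obtain ⟨hnd₁, hnd₂⟩ := nodup_of_min x l₁ l₂ w₁ w₂ hsum
  have hx1 : x ∉ l₁ := (List.nodup_cons.mp hnd₁).1
  have hx2 : negLit x ∉ l₂ := (List.nodup_cons.mp hnd₂).1
  have hlen₁ : 2 ≤ l₁.length := w₁.two_le_length hvars
  have hlen₂ : 2 ≤ l₂.length := by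
    have w₂' : Wk φ (negLit x) (negLit (negLit x)) l₂ := by rw [negLit_negLit]; exact w₂
    exact w₂'.two_le_length hvars
  have hl₁ne : l₁ ≠ [] := by intro h; rw [h] at hlen₁; simp at hlen₁
  have hl₂ne : l₂ ≠ [] := by intro h; rw [h] at hlen₂; simp at hlen₂
  have hlast₁ : l₁.getLast hl₁ne = negLit x := by
    have := w₁.getLast_eq; rwa [List.getLast_cons hl₁ne] at this
  have hlast₂ : l₂.getLast hl₂ne = x := by
    have := w₂.getLast_eq; rwa [List.getLast_cons hl₂ne] at this
  have hnx_nd₁ : negLit x ∉ l₁.dropLast := by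
    have := getLast_not_mem_dropLast (List.nodup_cons.mp hnd₁).2 hl₁ne
    rwa [hlast₁] at this
  have hx_nd₂ : x ∉ l₂.dropLast := by
    have := getLast_not_mem_dropLast (List.nodup_cons.mp hnd₂).2 hl₂ne
    rwa [hlast₂] at this
  by_cases hshare : ∃ v, v ∈ l₁.dropLast ∧ v ∈ l₂.dropLast
  · -- Case 2: shared interior vertex y; build the cycle through y and ¬y
    obtain ⟨y, hy₁, hy₂⟩ := hshare
    have hymem₁ : y ∈ l₁ := List.mem_of_mem_dropLast hy₁
    have hymem₂ : y ∈ l₂ := List.mem_of_mem_dropLast hy₂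
    have hyx : y ≠ x := fun h => hx1 (h ▸ hymem₁)
    have hynx : y ≠ negLit x := fun h => hnx_nd₁ (h ▸ hy₁)
    obtain ⟨lA1, lA2, hA, wA1, wA2⟩ := w₁.split (List.mem_cons_of_mem _ hymem₁)
    obtain ⟨lB1, lB2, hB, wB1, wB2⟩ := w₂.split (List.mem_cons_of_mem _ hymem₂)
    have hA1ne : lA1 ≠ [] := wA1.ne_nil (Ne.symm hyx)
    have hA2ne : lA2 ≠ [] := wA2.ne_nil hynx
    have hB1ne : lB1 ≠ [] := wB1.ne_nil (Ne.symm hynx)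
    have hB2ne : lB2 ≠ [] := wB2.ne_nil hyx
    obtain ⟨l₂', wP2, hlen₂', hmem₂'⟩ := wB2.negrev
    obtain ⟨l₁', wQ1, hlen₁', hmem₁'⟩ := wB1.negrev
    rw [negLit_negLit] at wQ1
    -- the two halves of the new contradictory closed walk through y, ¬y
    have wP : Wk φ y (negLit y) (lA2 ++ l₂') := wA2.append wP2
    have wQ : Wk φ (negLit y) y (l₁' ++ lA1) := wQ1.append wA1
    have hsum' : (lA2 ++ l₂').length + (l₁' ++ lA1).length = M := by
      have h1 := congrArg List.length hA
      have h2 := congrArg List.length hB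
      simp only [List.length_append] at h1 h2 ⊢
      omega
    obtain ⟨hndP, hndQ⟩ := nodup_of_min y (lA2 ++ l₂') (l₁' ++ lA1) wP wQ hsum'
    -- build the closed walk and its cycle list
    have wC : Wk φ y y ((lA2 ++ l₂') ++ (l₁' ++ lA1)) := wP.append wQ
    have hQne : (l₁' ++ lA1) ≠ [] := by
      intro h
      rcases List.append_eq_nil_iff.mp h with ⟨-, h2⟩
      exact hA1ne h2
    have hbigne : ((lA2 ++ l₂') ++ (l₁' ++ lA1)) ≠ [] := by
      intro h
      rcases List.append_eq_nil_iff.mp h with ⟨-, h2⟩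
      exact hQne h2
    obtain ⟨hchain, hback⟩ := cycle_of_closed wC hbigne
    have hdrop : ((lA2 ++ l₂') ++ (l₁' ++ lA1)).dropLast
        = (lA2 ++ l₂') ++ (l₁' ++ lA1).dropLast := List.dropLast_append_of_ne_nil hQne
    refine ⟨y :: ((lA2 ++ l₂') ++ (l₁' ++ lA1)).dropLast, y, ?_, ?_, hchain, fun h => hback, by simp, ?_⟩
    · -- Nodup
      rw [hdrop, List.nodup_cons]
      have hndLP := List.nodup_cons.mp hndP
      have hndLQ := List.nodup_cons.mp hndQ
      have hQlast : (l₁' ++ lA1).getLast hQne = y := by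
        have := wQ.getLast_eq; rwa [List.getLast_cons hQne] at this
      have hyQd : y ∉ (l₁' ++ lA1).dropLast := by
        have := getLast_not_mem_dropLast hndLQ.2 hQne
        rwa [hQlast] at this
      have hnl₁ : (lA1 ++ lA2).Nodup := by
        have := (List.nodup_cons.mp hnd₁).2; rwa [hA] at this
      have hnl₂ : (lB1 ++ lB2).Nodup := by
        have := (List.nodup_cons.mp hnd₂).2; rwa [hB] at this
      have hd₁ := List.nodup_append.mp hnl₁
      have hd₂ := List.nodup_append.mp hnl₂
      constructor
      · intro h
        rcases List.mem_append.mp h with h | h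
        · exact hndLP.1 h
        · exact hyQd h
      · rw [List.nodup_append]
        refine ⟨hndLP.2, List.Nodup.sublist (List.dropLast_sublist _) hndLQ.2, ?_⟩
        intro v hvP b hvQd hvb; subst hvb
        have hvQ : v ∈ l₁' ++ lA1 := List.mem_of_mem_dropLast hvQd
        have hvny : v ≠ negLit y := fun h => hndLQ.1 (h ▸ hvQ)
        have hlenA : lA2.length + lB1.length < M := by
          have h1 := congrArg List.length hA
          have h2 := congrArg List.length hB
          have h3 : 0 < lA1.length := List.length_pos_iff.mpr hA1ne
          have h4 : 0 < lB2.length := List.length_pos_iff.mpr hB2ne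
          simp only [List.length_append] at h1 h2
          omega
        have hlenB : lA1.length + lB2.length < M := by
          have h1 := congrArg List.length hA
          have h2 := congrArg List.length hB
          have h3 : 0 < lA2.length := List.length_pos_iff.mpr hA2ne
          have h4 : 0 < lB1.length := List.length_pos_iff.mpr hB1ne
          simp only [List.length_append] at h1 h2
          omega
        rcases List.mem_append.mp hvP with hva | hvb <;>
          rcases List.mem_append.mp hvQ with hvc | hvd
        · -- v ∈ lA2, v ∈ l₁'
          have hnv : negLit v ∈ negLit x :: lB1 := (hmem₁' v).mp (List.mem_cons_of_mem _ hvc)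
          refine pair_walks y v (lA2 ++ lB1) (wA2.append wB1) ?_ ?_ (by simpa using hlenA)
          · exact List.mem_cons_of_mem _ (List.mem_append.mpr (Or.inl hva))
          · rcases List.mem_cons.mp hnv with h | h
            · rw [h]
              rcases List.mem_cons.mp wA2.last_mem with h' | h'
              · rw [h']; simp
              · exact List.mem_cons_of_mem _ (List.mem_append.mpr (Or.inl h'))
            · exact List.mem_cons_of_mem _ (List.mem_append.mpr (Or.inr h))
        · -- v ∈ lA2, v ∈ lA1
          exact hd₁.2.2 _ hvd _ hva rfl
        · -- v ∈ l₂', v ∈ l₁'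
          have hnv2 : negLit v ∈ y :: lB2 := (hmem₂' v).mp (List.mem_cons_of_mem _ hvb)
          have hnv1 : negLit v ∈ negLit x :: lB1 := (hmem₁' v).mp (List.mem_cons_of_mem _ hvc)
          rcases List.mem_cons.mp hnv2 with h | h
          · exact hvny (by rw [← negLit_negLit v, h])
          · rcases List.mem_cons.mp hnv1 with h' | h'
            · rw [h'] at h
              refine hx2 ?_
              rw [hB]
              exact List.mem_append.mpr (Or.inr h)
            · exact hd₂.2.2 _ h' _ h rfl
        · -- v ∈ l₂', v ∈ lA1
          have hnv : negLit v ∈ y :: lB2 := (hmem₂' v).mp (List.mem_cons_of_mem _ hvb)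
          refine pair_walks x v (lA1 ++ lB2) (wA1.append wB2) ?_ ?_ (by simpa using hlenB)
          · exact List.mem_cons_of_mem _ (List.mem_append.mpr (Or.inl hvd))
          · rcases List.mem_cons.mp hnv with h | h
            · rw [h]
              rcases List.mem_cons.mp wA1.last_mem with h' | h'
              · rw [h']; simp
              · exact List.mem_cons_of_mem _ (List.mem_append.mpr (Or.inl h'))
            · exact List.mem_cons_of_mem _ (List.mem_append.mpr (Or.inr h))
    · -- length
      have h1 := congrArg List.length hA
      have h2 := congrArg List.length hB
      have h3 : 0 < lA1.length := List.length_pos_iff.mpr hA1ne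
      have hQd : (lA2 ++ l₂' ++ (l₁' ++ lA1)).length
          = (lA2 ++ l₂' ++ (l₁' ++ lA1)).dropLast.length + 1 := by
        rw [List.length_dropLast]
        have : 0 < (lA2 ++ l₂' ++ (l₁' ++ lA1)).length := List.length_pos_iff.mpr hbigne
        omega
      simp only [List.length_cons, List.length_append] at *
      omega
    · -- negLit y ∈ C
      rw [hdrop]
      have : negLit y ∈ y :: (lA2 ++ l₂') := wP.last_mem
      rcases List.mem_cons.mp this with h | h
      · exact absurd h (negLit_ne y)
      · exact List.mem_cons_of_mem _ (List.mem_append.mpr (Or.inl h))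
  · -- Case 1: interiors disjoint, the concatenation is already a cycle
    push_neg at hshare
    have wC : Wk φ x x (l₁ ++ l₂) := w₁.append w₂
    have hbigne : l₁ ++ l₂ ≠ [] := by
      intro h; rcases List.append_eq_nil_iff.mp h with ⟨-, h2⟩; exact hl₂ne h2
    obtain ⟨hchain, hback⟩ := cycle_of_closed wC hbigne
    have hdrop : (l₁ ++ l₂).dropLast = l₁ ++ l₂.dropLast :=
      List.dropLast_append_of_ne_nil hl₂ne
    refine ⟨x :: (l₁ ++ l₂).dropLast, x, ?_, ?_, hchain, fun h => hback, by simp, ?_⟩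
    · -- Nodup
      rw [hdrop, List.nodup_cons]
      constructor
      · intro h
        rcases List.mem_append.mp h with h | h
        · exact hx1 h
        · exact hx_nd₂ h
      · rw [List.nodup_append]
        refine ⟨(List.nodup_cons.mp hnd₁).2, ?_, ?_⟩
        · exact List.Nodup.sublist (List.dropLast_sublist _) (List.nodup_cons.mp hnd₂).2
        · intro v hv b hv' hvb; subst hvb
          have hvnx : v ≠ negLit x := by
            intro h
            exact hx2 (List.mem_of_mem_dropLast (h ▸ hv'))
          have hvd₁ : v ∈ l₁.dropLast := by
            have hd := List.dropLast_append_getLast hl₁ne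
            rw [hlast₁] at hd
            rw [← hd] at hv
            rcases List.mem_append.mp hv with h | h
            · exact h
            · simp only [List.mem_singleton] at h; exact absurd h hvnx
          exact absurd hv' (hshare v hvd₁)
    · -- length
      have hQd : (l₁ ++ l₂).length = (l₁ ++ l₂).dropLast.length + 1 := by
        rw [List.length_dropLast]
        have : 0 < (l₁ ++ l₂).length := List.length_pos_iff.mpr hbigne
        omega
      simp only [List.length_cons, List.length_append] at *
      omega
    · -- negLit x ∈ C
      rw [hdrop]
      have : negLit x ∈ x :: l₁ := w₁.last_mem
      rcases List.mem_cons.mp this with h | h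
      · exact absurd h (negLit_ne x)
      · exact List.mem_cons_of_mem _ (List.mem_append.mpr (Or.inl h))

end BP



set_option maxHeartbeats 1000000

/-- The implication digraph of an unsatisfiable 2-CNF formula contains
a basis of a `(k,a,b)`-bicycle all of whose edges (together with the two extra edges)
are edges of a single contradictory directed cycle.

Here a cycle is given by an injective map `w : Fin (m+2) → Lit n` together with all
cyclically consecutive edges; it is contradictory if it contains a pair of complementary
literals.  The basis of the bicycle is `u : Fin (k+2) → Lit n` (so its length is at
least `2`), and `α`, `β` are the 0-based indices of the literals `u_a`, `u_b`;
the 1-based constraints `2 ≤ a ≤ k` and `1 ≤ b ≤ k−1` become `1 ≤ α` and `β ≤ k`. -/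
theorem bicycle_of_unsatisfiable
    {n : ℕ} (φ : Finset (Lit n × Lit n))
    (hvars : ∀ c ∈ φ, c.1.1 ≠ c.2.1)
    (hunsat : ¬ Satisfiable2CNF φ) :
    ∃ (m : ℕ) (w : Fin (m + 2) → Lit n),
      -- `w` is a contradictory directed cycle of the implication digraph
      Function.Injective w ∧
      (∀ t : Fin (m + 2), (w t, w (t + 1)) ∈ implEdges φ) ∧
      (∃ s t : Fin (m + 2), w t = negLit (w s)) ∧
      -- a basis of a `(k,a,b)`-bicycle whose edges all lie on the cycle `w`
      ∃ (k : ℕ) (u : Fin (k + 2) → Lit n) (α β : Fin (k + 2)),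
        Function.Injective (fun t => (u t).1) ∧
        1 ≤ (α : ℕ) ∧ (β : ℕ) ≤ k ∧
        (∀ t : Fin (k + 1), (u t.castSucc, u t.succ) ∈ implEdges φ) ∧
        (negLit (u α), u 0) ∈ implEdges φ ∧
        (u (Fin.last (k + 1)), negLit (u β)) ∈ implEdges φ ∧
        (∀ t : Fin (k + 1), ∃ s : Fin (m + 2), (u t.castSucc, u t.succ) = (w s, w (s + 1))) ∧
        (∃ s : Fin (m + 2), (negLit (u α), u 0) = (w s, w (s + 1))) ∧
        (∃ s : Fin (m + 2), (u (Fin.last (k + 1)), negLit (u β)) = (w s, w (s + 1))) := by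
  classical
  obtain ⟨C, y, hnd, hlen, hchain, hback, hy, hny⟩ := BP.exists_contra_cycle hvars hunsat
  obtain ⟨m, hm⟩ : ∃ m, C.length = m + 2 := ⟨C.length - 2, by omega⟩
  have hCne : C ≠ [] := by
    intro h; rw [h] at hlen; simp at hlen
  set w : Fin (m + 2) → Lit n := fun t => C[(t : ℕ)]'(by rw [hm]; exact t.isLt) with hw
  have hgc : ∀ (i j : ℕ) (h : i = j) (hi : i < C.length), C[i]'hi = C[j]'(h ▸ hi) := by
    intro i j h hi; subst h; rfl
  have hinj : Function.Injective w := by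
    intro a b h
    rw [hw] at h
    simp only at h
    have := (hnd.getElem_inj_iff).mp h
    exact Fin.ext this
  have hedges : ∀ t : Fin (m + 2), (w t, w (t + 1)) ∈ implEdges φ := by
    intro t
    by_cases ht : (t : ℕ) + 1 < C.length
    · have hv : ((t + 1 : Fin (m + 2)) : ℕ) = (t : ℕ) + 1 := by
        have : ((t + 1 : Fin (m + 2)) : ℕ) = ((t : ℕ) + 1) % (m + 2) := by
          rw [Fin.add_def]
          simp [Fin.val_one]
        rw [this, Nat.mod_eq_of_lt (by omega)]
      have hchain' := List.isChain_iff_getElem.mp hchain (t : ℕ) (by omega)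
      have e1 : w (t + 1) = C[(t : ℕ) + 1]'(by omega) := by
        rw [hw]
        simp only
        exact hgc _ _ hv _
      have e2 : w t = C[(t : ℕ)]'(by omega) := rfl
      rw [e1, e2]
      exact hchain'
    · have htop : (t : ℕ) = m + 1 := by
        have := t.isLt
        omega
      have hv : ((t + 1 : Fin (m + 2)) : ℕ) = 0 := by
        rw [Fin.add_def]
        simp [Fin.val_one, htop]
      have e1 : w (t + 1) = C.head hCne := by
        rw [List.head_eq_getElem]
        rw [hw]
        simp only
        exact hgc _ _ hv _
      have e2 : w t = C.getLast hCne := by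
        rw [List.getLast_eq_getElem]
        rw [hw]
        simp only
        exact hgc _ _ (by omega) _
      rw [e1, e2]
      exact hback hCne
  have hcon : ∃ s t : Fin (m + 2), w t = negLit (w s) := by
    obtain ⟨iy, hiy, hEy⟩ := List.mem_iff_getElem.mp hy
    obtain ⟨iz, hiz, hEz⟩ := List.mem_iff_getElem.mp hny
    refine ⟨⟨iy, by omega⟩, ⟨iz, by omega⟩, ?_⟩
    show C[iz]'_ = negLit (C[iy]'_)
    rw [hEy, hEz]
  exact ⟨m, w, hinj, hedges, hcon, BP.bicycle_of_cycle hvars w hinj hedges hcon⟩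
end
end

section
/- Let W be a graphon (nonnegative, symmetric, essentially bounded measurable function) on K = Λ×{+,−} and let n ∈ ℕ. Let F ⊆ Lit_n × Lit_n be a set of ordered pairs of literals such that for every pair of literals (l_1, l_2) on different variables, |F ∩ {(l_1,l_2), (¬l_2,¬l_1)}| ≤ 1. Then the random edge sets G(n,→W) ∩ F and ImplDig(TwoSAT†(n,W)) ∩ F have the same distribution; that is, for every F' ⊆ F, P[G(n,→W) ∩ F = F'] = P[ImplDig(TwoSAT†(n,W)) ∩ F = F']. -/
open MeasureTheory ENNReal Filter Topology

noncomputable section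

/-- The map `τ` sending a literal to its type in `K`: `τ(v_i) = x_i`, `τ(¬v_i) = ¬x_i`. -/
def tauMap {Λ : Type*} {n : ℕ} (x : Fin n → Λ × Bool) (l : Lit n) : Λ × Bool :=
  if l.2 then x l.1 else negK (x l.1)

/-- Clause inclusion probability in the model `TwoSAT†(n, W)` given the sample `x`. -/
def clausePd {Λ : Type*} (W : (Λ × Bool) × (Λ × Bool) → ℝ) (n : ℕ)
    (x : Fin n → Λ × Bool) (c : Slot n) : ℝ :=
  min 1 (W (tauMap x (c.1, c.2.2.1), tauMap x (c.2.1, c.2.2.2)) / (2 * n))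

/-- All possible directed edges between literals on different variables. -/
def edgeSlots (n : ℕ) : Finset (Lit n × Lit n) :=
  Finset.univ.filter (fun e => e.1.1 ≠ e.2.1)

/-- Edge inclusion probability in the random digraph `𝔾(n, U)` given the sample `x`. -/
def edgeP {Λ : Type*} (U : (Λ × Bool) × (Λ × Bool) → ℝ) (n : ℕ)
    (x : Fin n → Λ × Bool) (e : Lit n × Lit n) : ℝ :=
  min 1 (U (tauMap x e.1, tauMap x e.2) / (2 * n))

/-- The implication digraph of a formula (given as a set of clause slots). -/
def implDigFinset {n : ℕ} (G : Finset (Slot n)) : Finset (Lit n × Lit n) :=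
  G.image (fun c => (negLit (c.1, c.2.2.1), (c.2.1, c.2.2.2))) ∪
    G.image (fun c => (negLit (c.2.1, c.2.2.2), (c.1, c.2.2.1)))

/-- `P[𝔾(n,U) ∩ F = F']` for the random digraph `𝔾(n, U)`. -/
def digraphRestrictionProb {Λ : Type*} [MeasurableSpace Λ] (lam : Measure Λ)
    (U : (Λ × Bool) × (Λ × Bool) → ℝ) (n : ℕ) (F F' : Finset (Lit n × Lit n)) : ℝ :=
  ∫ x : Fin n → Λ × Bool, ∑ H ∈ (edgeSlots n).powerset,
      (if H ∩ F = F' then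
        (∏ e ∈ H, edgeP U n x e) * ∏ e ∈ edgeSlots n \ H, (1 - edgeP U n x e)
      else 0)
    ∂(Measure.pi fun _ => kappa lam)

/-- `P[ImplDig(TwoSAT†(n,W)) ∩ F = F']` for the random formula `TwoSAT†(n, W)`. -/
def implRestrictionProb {Λ : Type*} [MeasurableSpace Λ] (lam : Measure Λ)
    (W : (Λ × Bool) × (Λ × Bool) → ℝ) (n : ℕ) (F F' : Finset (Lit n × Lit n)) : ℝ :=
  ∫ x : Fin n → Λ × Bool, ∑ G ∈ (slots n).powerset,
      (if implDigFinset G ∩ F = F' then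
        (∏ c ∈ G, clausePd W n x c) * ∏ c ∈ slots n \ G, (1 - clausePd W n x c)
      else 0)
    ∂(Measure.pi fun _ => kappa lam)

section MarginalAux

variable {α β : Type*} [DecidableEq α] [DecidableEq β]

variable {α β : Type*} [DecidableEq α] [DecidableEq β]

lemma aux_sum_one (U : Finset α) (p : α → ℝ) :
    ∑ K ∈ U.powerset, (∏ a ∈ K, p a) * ∏ a ∈ U \ K, (1 - p a) = 1 := by
  rw [← Finset.prod_add]
  simp

lemma aux_lemA (S F F' : Finset α) (hFS : F ⊆ S) (hF' : F' ⊆ F) (p : α → ℝ) :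
    (∑ H ∈ S.powerset, if H ∩ F = F' then (∏ a ∈ H, p a) * ∏ a ∈ S \ H, (1 - p a) else 0)
      = (∏ a ∈ F', p a) * ∏ a ∈ F \ F', (1 - p a) := by
  classical
  rw [← Finset.sum_filter]
  have key : ∑ H ∈ S.powerset.filter (fun H => H ∩ F = F'),
      (∏ a ∈ H, p a) * ∏ a ∈ S \ H, (1 - p a)
      = ∑ K ∈ (S \ F).powerset,
        ((∏ a ∈ F', p a) * ∏ a ∈ F \ F', (1 - p a)) *
          ((∏ a ∈ K, p a) * ∏ a ∈ (S \ F) \ K, (1 - p a)) := by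
    refine Finset.sum_nbij' (fun H => H \ F) (fun K => F' ∪ K) ?_ ?_ ?_ ?_ ?_
    · intro H hH
      simp only [Finset.mem_filter, Finset.mem_powerset] at hH ⊢
      exact Finset.sdiff_subset_sdiff hH.1 (Finset.Subset.refl F)
    · intro K hK
      simp only [Finset.mem_filter, Finset.mem_powerset] at hK ⊢
      refine ⟨Finset.union_subset (hF'.trans hFS) (hK.trans Finset.sdiff_subset), ?_⟩
      ext a
      simp only [Finset.mem_inter, Finset.mem_union]
      constructor
      · rintro ⟨ha | ha, haF⟩
        · exact ha
        · exact absurd haF (Finset.mem_sdiff.mp (hK ha)).2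
      · intro ha; exact ⟨Or.inl ha, hF' ha⟩
    · intro H hH
      simp only [Finset.mem_filter, Finset.mem_powerset] at hH
      rw [← hH.2]
      ext a
      simp only [Finset.mem_union, Finset.mem_inter, Finset.mem_sdiff]
      tauto
    · intro K hK
      simp only [Finset.mem_powerset] at hK
      ext a
      simp only [Finset.mem_sdiff, Finset.mem_union]
      have h1 : a ∈ F' → a ∈ F := @hF' a
      have h2 : a ∈ K → a ∈ S ∧ a ∉ F := fun h => Finset.mem_sdiff.mp (hK h)
      tauto
    · intro H hH
      simp only [Finset.mem_filter, Finset.mem_powerset] at hH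
      obtain ⟨hHS, hHF⟩ := hH
      have hmem : ∀ a, a ∈ F' ↔ a ∈ H ∧ a ∈ F := by
        intro a; rw [← hHF]; simp [Finset.mem_inter]
      have hH_eq : H = F' ∪ (H \ F) := by
        ext a
        simp only [Finset.mem_union, Finset.mem_sdiff]
        have := hmem a; tauto
      have hS_eq : S \ H = (F \ F') ∪ ((S \ F) \ (H \ F)) := by
        ext a
        simp only [Finset.mem_union, Finset.mem_sdiff]
        have := hmem a
        have := @hFS a
        have := @hHS a
        tauto
      have hd1 : Disjoint F' (H \ F) := by
        rw [Finset.disjoint_left]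
        intro a ha haH
        exact (Finset.mem_sdiff.mp haH).2 (hF' ha)
      have hd2 : Disjoint (F \ F') ((S \ F) \ (H \ F)) := by
        rw [Finset.disjoint_left]
        intro a ha haH
        exact (Finset.mem_sdiff.mp (Finset.mem_sdiff.mp haH).1).2 (Finset.mem_sdiff.mp ha).1
      have hp1 : (∏ a ∈ H, p a) = (∏ a ∈ F', p a) * ∏ a ∈ H \ F, p a := by
        conv_lhs => rw [hH_eq]
        rw [Finset.prod_union hd1]
      calc (∏ a ∈ H, p a) * ∏ a ∈ S \ H, (1 - p a)
          = ((∏ a ∈ F', p a) * ∏ a ∈ H \ F, p a) *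
            ((∏ a ∈ F \ F', (1 - p a)) * ∏ a ∈ (S \ F) \ (H \ F), (1 - p a)) := by
            rw [hp1, hS_eq, Finset.prod_union hd2]
        _ = _ := by ring
  rw [key, ← Finset.mul_sum, aux_sum_one, mul_one]

lemma aux_lemB (S : Finset α) (F F' : Finset β) (hF' : F' ⊆ F)
    (cl : β → α) (hinj : ∀ e ∈ F, ∀ e' ∈ F, cl e = cl e' → e = e')
    (hclS : ∀ e ∈ F, cl e ∈ S) (p : α → ℝ) :
    (∑ H ∈ S.powerset, if F.filter (fun e => cl e ∈ H) = F' then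
        (∏ a ∈ H, p a) * ∏ a ∈ S \ H, (1 - p a) else 0)
      = (∏ e ∈ F', p (cl e)) * ∏ e ∈ F \ F', (1 - p (cl e)) := by
  classical
  have hcond : ∀ H : Finset α,
      (F.filter (fun e => cl e ∈ H) = F') ↔ (H ∩ F.image cl = F'.image cl) := by
    intro H
    constructor
    · intro hfilt
      ext c
      simp only [Finset.mem_inter, Finset.mem_image]
      constructor
      · rintro ⟨hcH, e, heF, rfl⟩
        refine ⟨e, ?_, rfl⟩
        rw [← hfilt]; exact Finset.mem_filter.mpr ⟨heF, hcH⟩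
      · rintro ⟨e, heF', rfl⟩
        have h1 : e ∈ F.filter (fun e => cl e ∈ H) := hfilt ▸ heF'
        have h2 := Finset.mem_filter.mp h1
        exact ⟨h2.2, e, h2.1, rfl⟩
    · intro hint
      ext e
      simp only [Finset.mem_filter]
      constructor
      · rintro ⟨heF, hcH⟩
        have hm : cl e ∈ F'.image cl := by
          rw [← hint]
          exact Finset.mem_inter.mpr ⟨hcH, Finset.mem_image_of_mem cl heF⟩
        obtain ⟨e', he', heq⟩ := Finset.mem_image.mp hm
        rwa [← hinj e' (hF' he') e heF heq]
      · intro heF'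
        refine ⟨hF' heF', ?_⟩
        have hm : cl e ∈ H ∩ F.image cl := by
          rw [hint]; exact Finset.mem_image_of_mem cl heF'
        exact (Finset.mem_inter.mp hm).1
  have hstep : (∑ H ∈ S.powerset, if F.filter (fun e => cl e ∈ H) = F' then
        (∏ a ∈ H, p a) * ∏ a ∈ S \ H, (1 - p a) else 0)
      = ∑ H ∈ S.powerset, if H ∩ F.image cl = F'.image cl then
        (∏ a ∈ H, p a) * ∏ a ∈ S \ H, (1 - p a) else 0 :=
    Finset.sum_congr rfl (fun H _ => if_congr (hcond H) rfl rfl)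
  rw [hstep, aux_lemA S (F.image cl) (F'.image cl)
    (Finset.image_subset_iff.mpr hclS) (Finset.image_subset_image hF') p]
  have himg : F.image cl \ F'.image cl = (F \ F').image cl := by
    ext c
    simp only [Finset.mem_sdiff, Finset.mem_image]
    constructor
    · rintro ⟨⟨e, heF, rfl⟩, hnot⟩
      exact ⟨e, ⟨heF, fun he' => hnot ⟨e, he', rfl⟩⟩, rfl⟩
    · rintro ⟨e, ⟨heF, heF'⟩, rfl⟩
      refine ⟨⟨e, heF, rfl⟩, ?_⟩
      rintro ⟨e', he', heq⟩
      exact heF' (hinj e' (hF' he') e heF heq ▸ he')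
  rw [himg, Finset.prod_image, Finset.prod_image]
  · intro a ha b hb
    exact hinj a ((Finset.mem_sdiff.mp ha).1) b ((Finset.mem_sdiff.mp hb).1)
  · intro a ha b hb
    exact hinj a (hF' ha) b (hF' hb)

end MarginalAux

section DomainAux

/-- The clause slot corresponding to a directed implication edge. -/
def clOf {n : ℕ} (e : Lit n × Lit n) : Slot n :=
  if e.1.1 < e.2.1 then (e.1.1, e.2.1, !e.1.2, e.2.2)
  else (e.2.1, e.1.1, e.2.2, !e.1.2)

lemma tauMap_negLit {Λ : Type*} {n : ℕ} (x : Fin n → Λ × Bool) (l : Lit n) :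
    tauMap x (negLit l) = negK (tauMap x l) := by
  rcases l with ⟨i, b⟩
  cases b <;> simp [tauMap, negLit, negK]

lemma clausePd_clOf {Λ : Type*} (W : (Λ × Bool) × (Λ × Bool) → ℝ)
    (hWsymm : ∀ z w, W (z, w) = W (w, z)) {n : ℕ} (x : Fin n → Λ × Bool)
    (e : Lit n × Lit n) :
    clausePd W n x (clOf e) = edgeP (implKer W) n x e := by
  unfold clausePd edgeP clOf implKer
  by_cases h : e.1.1 < e.2.1
  · rw [if_pos h]
    show min 1 (W (tauMap x (negLit e.1), tauMap x e.2) / (2 * n)) = _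
    rw [tauMap_negLit]
  · rw [if_neg h]
    show min 1 (W (tauMap x e.2, tauMap x (negLit e.1)) / (2 * n)) = _
    rw [tauMap_negLit, hWsymm]

lemma mem_implDig_iff {n : ℕ} (G : Finset (Slot n)) (hG : G ⊆ slots n)
    (e : Lit n × Lit n) (he : e.1.1 ≠ e.2.1) :
    e ∈ implDigFinset G ↔ clOf e ∈ G := by
  constructor
  · intro hmem
    rcases Finset.mem_union.mp hmem with h | h <;>
      obtain ⟨c, hc, hce⟩ := Finset.mem_image.mp h
    · have hlt : c.1 < c.2.1 := by
        have := hG hc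
        simpa [slots] using this
      have hval : clOf e = c := by
        rw [← hce]
        simp [clOf, negLit, hlt]
      rwa [hval]
    · have hlt : c.1 < c.2.1 := by
        have := hG hc
        simpa [slots] using this
      have hval : clOf e = c := by
        rw [← hce]
        simp [clOf, negLit, lt_asymm hlt]
      rwa [hval]
  · intro hcG
    rcases lt_or_gt_of_ne he with hlt | hgt
    · refine Finset.mem_union_left _ (Finset.mem_image.mpr ⟨clOf e, hcG, ?_⟩)
      simp [clOf, negLit, hlt]
    · refine Finset.mem_union_right _ (Finset.mem_image.mpr ⟨clOf e, hcG, ?_⟩)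
      simp [clOf, negLit, lt_asymm hgt]

lemma clOf_injOn {n : ℕ} (F : Finset (Lit n × Lit n))
    (hF : ∀ l1 l2 : Lit n, l1.1 ≠ l2.1 →
      ¬ ((l1, l2) ∈ F ∧ (negLit l2, negLit l1) ∈ F)) :
    ∀ e ∈ F, ∀ e' ∈ F, clOf e = clOf e' → e = e' := by
  intro e he e' he' heq
  obtain ⟨⟨i, a⟩, ⟨j, b⟩⟩ := e
  obtain ⟨⟨i', a'⟩, ⟨j', b'⟩⟩ := e'
  simp only [clOf] at heq
  by_cases h1 : i < j <;> by_cases h2 : i' < j' <;>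
    simp only [h1, h2, if_true, if_false, Prod.mk.injEq] at heq
  · obtain ⟨rfl, rfl, h5, rfl⟩ := heq
    have : a = a' := by simpa using h5
    subst this
    rfl
  · -- i < j, ¬ i' < j' : e' = (negLit (j,b), negLit (i,a))
    obtain ⟨h3, h4, h5, h6⟩ := heq
    refine absurd ⟨he, ?_⟩ (hF (i, a) (j, b) (ne_of_lt h1))
    have ha' : a' = !b := by rw [h6, Bool.not_not]
    rw [show (i' : Fin n) = j from h4.symm, show (j' : Fin n) = i from h3.symm,
      ha', show b' = !a from h5.symm] at he'
    exact he'
  · -- ¬ i < j, i' < j' : e = (negLit (j',b'), negLit (i',a'))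
    obtain ⟨h3, h4, h5, h6⟩ := heq
    refine absurd ⟨he', ?_⟩ (hF (i', a') (j', b') (ne_of_lt h2))
    have ha : a = !b' := by rw [← h6, Bool.not_not]
    rw [show (i : Fin n) = j' from h4, show (j : Fin n) = i' from h3, ha,
      show b = !a' from h5] at he
    exact he
  · obtain ⟨rfl, rfl, rfl, h6⟩ := heq
    have : a = a' := by simpa using h6
    subst this
    rfl

end DomainAux

/-- If `F` contains at most one edge from each pair of equivalent
directed edges `{(l₁,l₂), (¬l₂,¬l₁)}`, then `𝔾(n, →W) ∩ F` and
`ImplDig(TwoSAT†(n, W)) ∩ F` have the same distribution. -/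
theorem marginals_same
    {Λ : Type*} [MeasurableSpace Λ] [TopologicalSpace Λ] [PolishSpace Λ] [BorelSpace Λ]
    (lam : Measure Λ) [IsProbabilityMeasure lam]
    (W : (Λ × Bool) × (Λ × Bool) → ℝ)
    (hWmeas : Measurable W)
    (hWnonneg : ∀ z, 0 ≤ W z)
    (hWsymm : ∀ z w, W (z, w) = W (w, z))
    (hWbdd : MemLp W ⊤ ((kappa lam).prod (kappa lam)))
    (n : ℕ) (F : Finset (Lit n × Lit n))
    (hFvar : ∀ e ∈ F, e.1.1 ≠ e.2.1)
    (hF : ∀ l1 l2 : Lit n, l1.1 ≠ l2.1 →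
      ¬ ((l1, l2) ∈ F ∧ (negLit l2, negLit l1) ∈ F)) :
    ∀ F' ⊆ F,
      digraphRestrictionProb lam (implKer W) n F F' = implRestrictionProb lam W n F F' := by
  intro F' hF'
  classical
  unfold digraphRestrictionProb implRestrictionProb
  refine integral_congr_ae (Filter.Eventually.of_forall fun x => ?_)
  dsimp only
  have hFedge : F ⊆ edgeSlots n := by
    intro e he
    simp only [edgeSlots, Finset.mem_filter, Finset.mem_univ, true_and]
    exact hFvar e he
  have hinj := clOf_injOn F hF
  have hclS : ∀ e ∈ F, clOf e ∈ slots n := by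
    intro e he
    simp only [slots, Finset.mem_filter, Finset.mem_univ, true_and, clOf]
    rcases lt_or_gt_of_ne (hFvar e he) with h | h
    · rw [if_pos h]; exact h
    · rw [if_neg (lt_asymm h)]; exact h
  have hL : (∑ H ∈ (edgeSlots n).powerset, if H ∩ F = F' then
        (∏ e ∈ H, edgeP (implKer W) n x e) *
          ∏ e ∈ edgeSlots n \ H, (1 - edgeP (implKer W) n x e) else 0)
      = (∏ e ∈ F', edgeP (implKer W) n x e) *
          ∏ e ∈ F \ F', (1 - edgeP (implKer W) n x e) :=
    aux_lemA _ _ _ hFedge hF' _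
  have hR : (∑ G ∈ (slots n).powerset, if implDigFinset G ∩ F = F' then
        (∏ c ∈ G, clausePd W n x c) * ∏ c ∈ slots n \ G, (1 - clausePd W n x c) else 0)
      = (∏ e ∈ F', clausePd W n x (clOf e)) *
          ∏ e ∈ F \ F', (1 - clausePd W n x (clOf e)) := by
    rw [← aux_lemB (slots n) F F' hF' clOf hinj hclS (clausePd W n x)]
    refine Finset.sum_congr rfl fun G hG => ?_
    refine if_congr ?_ rfl rfl
    have hGsub : G ⊆ slots n := Finset.mem_powerset.mp hG
    have hset : implDigFinset G ∩ F = F.filter (fun e => clOf e ∈ G) := by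
      ext e
      simp only [Finset.mem_inter, Finset.mem_filter]
      constructor
      · rintro ⟨h1, h2⟩
        exact ⟨h2, (mem_implDig_iff G hGsub e (hFvar e h2)).mp h1⟩
      · rintro ⟨h1, h2⟩
        exact ⟨(mem_implDig_iff G hGsub e (hFvar e h1)).mpr h2, h1⟩
    rw [hset]
  rw [hL, hR]
  congr 1
  · exact Finset.prod_congr rfl fun e _ => (clausePd_clOf W hWsymm x e).symm
  · exact Finset.prod_congr rfl fun e _ => by rw [clausePd_clOf W hWsymm x e]
end
end

section
/- Let (Ω,μ) be a probability space, let 1 ≤ q ≤ p < ∞, and let Γ be a nonnegative measurable kernel on Ω² such that the integral kernel operator T_Γ, (T_Γ f)(x) = ∫ f(y) Γ(y,x) dμ(y), is a compact operator both on L^q(Ω) and on L^p(Ω). Then the spectral radii agree: ρ_p(Γ) = ρ_q(Γ). -/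
open MeasureTheory ENNReal Filter Topology Metric NormedSpace

noncomputable section

namespace SRAux

variable {E : Type*} [NormedAddCommGroup E] [NormedSpace ℂ E] [CompleteSpace E]




/-- An eigenvector gives a spectrum membership. -/
theorem mem_spectrum_of_eigen {F : Type*} [NormedAddCommGroup F] [NormedSpace ℂ F]
    (S : F →L[ℂ] F) {l : ℂ} {f : F} (hf : f ≠ 0) (hSf : S f = l • f) :
    l ∈ spectrum ℂ S := by
  rw [spectrum.mem_iff]
  intro hu
  apply hf
  have h0 : (algebraMap ℂ (F →L[ℂ] F) l - S) f = 0 := by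
    simp [ContinuousLinearMap.sub_apply, Algebra.algebraMap_eq_smul_one,
      ContinuousLinearMap.smul_apply, hSf]
  calc f = ((hu.unit⁻¹ : (F →L[ℂ] F)ˣ) : F →L[ℂ] F)
        ((algebraMap ℂ (F →L[ℂ] F) l - S) f) := by
        rw [← ContinuousLinearMap.comp_apply, ← ContinuousLinearMap.mul_def]
        rw [show ((hu.unit⁻¹ : (F →L[ℂ] F)ˣ) : F →L[ℂ] F) * (algebraMap ℂ (F →L[ℂ] F) l - S)
            = 1 by simpa using hu.unit.inv_mul]
        simp
    _ = 0 := by rw [h0]; simp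

theorem nnnorm_le_spectralRadius_of_mem {A : Type*} [NormedRing A] [NormedAlgebra ℂ A]
    {a : A} {l : ℂ} (hl : l ∈ spectrum ℂ a) : (‖l‖₊ : ℝ≥0∞) ≤ spectralRadius ℂ a :=
  le_iSup₂ (f := fun k (_ : k ∈ spectrum ℂ a) => (‖k‖₊ : ℝ≥0∞)) l hl





theorem exists_eigen_of_compact [Nontrivial E] (T : E →L[ℂ] E) (hT : IsCompactOperator T)
    (hρ : spectralRadius ℂ T ≠ 0) :
    ∃ (l : ℂ) (f : E), f ≠ 0 ∧ T f = l • f ∧ (‖l‖₊ : ℝ≥0∞) = spectralRadius ℂ T := by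
  classical
  have hnt : Nontrivial (E →L[ℂ] E) := by
    obtain ⟨x, hx⟩ := exists_ne (0 : E)
    refine ⟨1, 0, fun h => hx ?_⟩
    have := DFunLike.congr_fun h x
    simpa using this
  obtain ⟨l, hl, hlr⟩ := spectrum.exists_nnnorm_eq_spectralRadius (T : E →L[ℂ] E)
  have hl0 : l ≠ 0 := by
    rintro rfl; exact hρ (by simpa using hlr.symm)
  have hl_pos : (0:ℝ) < ‖l‖ := norm_pos_iff.mpr hl0
  set ln : ℕ → ℂ := fun n => l * (1 + (n+1 : ℝ)⁻¹) with hln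
  have hln_sub : ∀ n : ℕ, ln n - l = l * (((n+1 : ℝ))⁻¹ : ℂ) := by
    intro n; rw [hln]; push_cast; ring
  have hln_mem : ∀ n : ℕ, IsUnit (algebraMap ℂ (E →L[ℂ] E) (ln n) - T) := by
    intro n
    have hlt : spectralRadius ℂ T < ‖ln n‖₊ := by
      rw [← hlr]
      have : ‖l‖ < ‖ln n‖ := by
        rw [hln]
        simp only [norm_mul]
        have h1 : (1 : ℝ) < ‖(1 + ((n+1:ℝ))⁻¹ : ℂ)‖ := by
          have : (1 + ((n+1:ℝ))⁻¹ : ℂ) = ((1 + (n+1:ℝ)⁻¹ : ℝ) : ℂ) := by push_cast; ring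
          rw [this, Complex.norm_real]
          rw [Real.norm_eq_abs, abs_of_pos (by positivity)]
          nlinarith [inv_pos.mpr (show (0:ℝ) < n+1 by positivity)]
        nlinarith [norm_pos_iff.mpr hl0]
      exact_mod_cast this
    have := spectrum.mem_resolventSet_of_spectralRadius_lt hlt
    rwa [resolventSet, Set.mem_setOf_eq] at this
  set R : ℕ → (E →L[ℂ] E) := fun n => (((hln_mem n).unit⁻¹ : (E →L[ℂ] E)ˣ) : E →L[ℂ] E)
    with hR
  have hnorm_sub : ∀ n : ℕ, ‖algebraMap ℂ (E →L[ℂ] E) l - algebraMap ℂ (E →L[ℂ] E) (ln n)‖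
      = ‖l‖ * ((n:ℝ)+1)⁻¹ := by
    intro n
    rw [← map_sub]
    have h1 : l - ln n = -(l * (((n+1 : ℝ))⁻¹ : ℂ)) := by
      rw [← hln_sub n]; ring
    rw [h1, map_neg, norm_neg, Algebra.algebraMap_eq_smul_one, norm_smul, norm_one, mul_one,
      norm_mul]
    congr 1
    rw [norm_inv, Complex.norm_real, Real.norm_eq_abs, abs_of_pos (by positivity)]
  have hRne : ∀ n : ℕ, R n ≠ 0 := by
    intro n h
    have h1 : (1 : E →L[ℂ] E) = 0 := by
      rw [← (hln_mem n).unit.inv_mul,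
        show (((hln_mem n).unit⁻¹ : (E →L[ℂ] E)ˣ) : E →L[ℂ] E) = R n from rfl, h, zero_mul]
    exact one_ne_zero h1
  have hRpos : ∀ n : ℕ, (0:ℝ) < ‖R n‖ := fun n => norm_pos_iff.mpr (hRne n)
  have hRlow : ∀ n : ℕ, ((n:ℝ)+1) / ‖l‖ ≤ ‖R n‖ := by
    intro n
    by_contra hcon
    push_neg at hcon
    have hb : (0:ℝ) < (n:ℝ)+1 := by positivity
    have h4 : ‖R n‖ * ‖l‖ < (n:ℝ)+1 := (lt_div_iff₀ hl_pos).mp hcon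
    have h5 : ‖l‖ * ((n:ℝ)+1)⁻¹ * ‖R n‖ < 1 := by
      calc ‖l‖ * ((n:ℝ)+1)⁻¹ * ‖R n‖ = ((n:ℝ)+1)⁻¹ * (‖R n‖ * ‖l‖) := by ring
        _ < ((n:ℝ)+1)⁻¹ * ((n:ℝ)+1) :=
            mul_lt_mul_of_pos_left h4 (by positivity)
        _ = 1 := inv_mul_cancel₀ (ne_of_gt hb)
    have hclose : ‖algebraMap ℂ (E →L[ℂ] E) l - T - ((hln_mem n).unit : E →L[ℂ] E)‖
        < ‖R n‖⁻¹ := by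
      rw [IsUnit.unit_spec]
      have h2 : algebraMap ℂ (E →L[ℂ] E) l - T - (algebraMap ℂ (E →L[ℂ] E) (ln n) - T)
          = algebraMap ℂ (E →L[ℂ] E) l - algebraMap ℂ (E →L[ℂ] E) (ln n) := by abel
      rw [h2, hnorm_sub n]
      have h6 : ‖l‖ * ((n:ℝ)+1)⁻¹ * ‖R n‖ < ‖R n‖⁻¹ * ‖R n‖ := by
        rw [inv_mul_cancel₀ (ne_of_gt (hRpos n))]; exact h5
      exact lt_of_mul_lt_mul_right h6 (le_of_lt (hRpos n))
    have : IsUnit (algebraMap ℂ (E →L[ℂ] E) l - T) :=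
      (Units.ofNearby (hln_mem n).unit _ hclose).isUnit
    rw [spectrum.mem_iff] at hl
    exact hl this
  -- choose near-maximizing vectors
  have hyex : ∀ n : ℕ, ∃ y : E, ‖y‖ ≤ 1 ∧ ‖R n‖ / 2 < ‖R n y‖ := by
    intro n
    by_contra hcon
    push_neg at hcon
    have hb : ‖R n‖ ≤ ‖R n‖ / 2 := by
      apply ContinuousLinearMap.opNorm_le_bound' _ (by positivity)
      intro x hx
      have hxpos : (0:ℝ) < ‖x‖ := (norm_nonneg x).lt_of_ne (Ne.symm hx)
      have hone : ‖((‖x‖ : ℂ))⁻¹ • x‖ ≤ 1 := by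
        rw [norm_smul, norm_inv, Complex.norm_real, Real.norm_eq_abs, abs_of_pos hxpos,
          inv_mul_cancel₀ (ne_of_gt hxpos)]
      have h2 := hcon _ hone
      rw [ContinuousLinearMap.map_smul, norm_smul, norm_inv, Complex.norm_real,
        Real.norm_eq_abs, abs_of_pos hxpos] at h2
      calc ‖(R n) x‖ = ‖x‖ * (‖x‖⁻¹ * ‖(R n) x‖) := by field_simp
        _ ≤ ‖x‖ * (‖R n‖ / 2) := mul_le_mul_of_nonneg_left h2 (norm_nonneg _)
        _ = ‖R n‖ / 2 * ‖x‖ := by ring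
    linarith [hRpos n]
  choose y hy1 hy2 using hyex
  have hRy_pos : ∀ n, (0:ℝ) < ‖R n (y n)‖ := by
    intro n
    exact lt_of_le_of_lt (by positivity) (hy2 n)
  set x : ℕ → E := fun n => ((‖R n (y n)‖ : ℂ))⁻¹ • R n (y n) with hx
  have hx_norm : ∀ n, ‖x n‖ = 1 := by
    intro n
    rw [hx]
    simp only [norm_smul, norm_inv, Complex.norm_real, Real.norm_eq_abs,
      abs_of_pos (hRy_pos n)]
    exact inv_mul_cancel₀ (ne_of_gt (hRy_pos n))
  have hkey : ∀ n : ℕ, ‖(algebraMap ℂ (E →L[ℂ] E) l - T) (x n)‖ ≤ 3 * ‖l‖ * ((n:ℝ)+1)⁻¹ := by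
    intro n
    have hsplit : algebraMap ℂ (E →L[ℂ] E) l - T
        = (algebraMap ℂ (E →L[ℂ] E) (ln n) - T)
          + (algebraMap ℂ (E →L[ℂ] E) l - algebraMap ℂ (E →L[ℂ] E) (ln n)) := by abel
    have happ1 : (algebraMap ℂ (E →L[ℂ] E) (ln n) - T) (x n)
        = ((‖R n (y n)‖ : ℂ))⁻¹ • y n := by
      have hxn : x n = ((‖R n (y n)‖ : ℂ))⁻¹ • R n (y n) := rfl
      rw [hxn, ContinuousLinearMap.map_smul]
      congr 1
      have hone : ((hln_mem n).unit : E →L[ℂ] E) * R n = 1 := by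
        rw [show R n = (((hln_mem n).unit⁻¹ : (E →L[ℂ] E)ˣ) : E →L[ℂ] E) from rfl,
          ← Units.val_mul, mul_inv_cancel, Units.val_one]
      calc (algebraMap ℂ (E →L[ℂ] E) (ln n) - T) (R n (y n))
          = (((hln_mem n).unit : E →L[ℂ] E) * R n) (y n) := by
            rw [ContinuousLinearMap.mul_apply, IsUnit.unit_spec]
        _ = y n := by rw [hone]; simp
    have hnorm_inv : ‖((‖R n (y n)‖ : ℂ))⁻¹‖ = ‖R n (y n)‖⁻¹ := by
      rw [norm_inv, Complex.norm_real, Real.norm_eq_abs, abs_of_pos (hRy_pos n)]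
    have hb1 : ‖(algebraMap ℂ (E →L[ℂ] E) (ln n) - T) (x n)‖ ≤ 2 * ‖l‖ * ((n:ℝ)+1)⁻¹ := by
      rw [happ1, norm_smul, hnorm_inv]
      have hb : (0:ℝ) < (n:ℝ)+1 := by positivity
      have h1 : ‖R n (y n)‖⁻¹ ≤ (‖R n‖ / 2)⁻¹ :=
        inv_anti₀ (by linarith [hRpos n]) (le_of_lt (hy2 n))
      have h2 : (‖R n‖/2)⁻¹ ≤ (((n:ℝ)+1) / ‖l‖ / 2)⁻¹ := by
        apply inv_anti₀ (by positivity)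
        linarith [hRlow n]
      have h3 : (((n:ℝ)+1) / ‖l‖ / 2)⁻¹ = 2 * ‖l‖ * ((n:ℝ)+1)⁻¹ := by
        field_simp
      calc ‖R n (y n)‖⁻¹ * ‖y n‖ ≤ ‖R n (y n)‖⁻¹ * 1 :=
            mul_le_mul_of_nonneg_left (hy1 n) (by positivity)
        _ = ‖R n (y n)‖⁻¹ := mul_one _
        _ ≤ 2 * ‖l‖ * ((n:ℝ)+1)⁻¹ := by rw [← h3]; exact le_trans h1 h2
    have hb2 : ‖(algebraMap ℂ (E →L[ℂ] E) l - algebraMap ℂ (E →L[ℂ] E) (ln n)) (x n)‖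
        ≤ ‖l‖ * ((n:ℝ)+1)⁻¹ := by
      calc ‖(algebraMap ℂ (E →L[ℂ] E) l - algebraMap ℂ (E →L[ℂ] E) (ln n)) (x n)‖
          ≤ ‖algebraMap ℂ (E →L[ℂ] E) l - algebraMap ℂ (E →L[ℂ] E) (ln n)‖ * ‖x n‖ :=
            ContinuousLinearMap.le_opNorm _ _
        _ = ‖l‖ * ((n:ℝ)+1)⁻¹ := by rw [hnorm_sub n, hx_norm n, mul_one]
    calc ‖(algebraMap ℂ (E →L[ℂ] E) l - T) (x n)‖
        = ‖(algebraMap ℂ (E →L[ℂ] E) (ln n) - T) (x n)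
            + (algebraMap ℂ (E →L[ℂ] E) l - algebraMap ℂ (E →L[ℂ] E) (ln n)) (x n)‖ := by
          rw [← ContinuousLinearMap.add_apply, ← hsplit]
      _ ≤ 2 * ‖l‖ * ((n:ℝ)+1)⁻¹ + ‖l‖ * ((n:ℝ)+1)⁻¹ := norm_add_le_of_le hb1 hb2
      _ = 3 * ‖l‖ * ((n:ℝ)+1)⁻¹ := by ring
  have htend0 : Tendsto (fun n => (algebraMap ℂ (E →L[ℂ] E) l - T) (x n)) atTop (𝓝 0) := by
    rw [tendsto_zero_iff_norm_tendsto_zero]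
    apply squeeze_zero (fun n => norm_nonneg _) hkey
    have h1 : Tendsto (fun n : ℕ => ((n:ℝ)+1)⁻¹) atTop (𝓝 0) := by
      simpa [one_div] using tendsto_one_div_add_atTop_nhds_zero_nat (𝕜 := ℝ)
    have := h1.const_mul (3 * ‖l‖)
    simpa [mul_assoc] using this
  -- extract convergent subsequence using compactness
  obtain ⟨K, hK, hKmem⟩ := hT
  obtain ⟨ε, hε, hball⟩ := Metric.mem_nhds_iff.mp hKmem
  have hcε : ((ε : ℝ) : ℂ) / 2 ≠ 0 := by
    simp only [div_ne_zero_iff]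
    constructor
    · exact_mod_cast ne_of_gt hε
    · norm_num
  have hzK : ∀ n, T ((((ε : ℝ) : ℂ)/2) • x n) ∈ K := by
    intro n
    apply hball
    rw [mem_ball_zero_iff, norm_smul, hx_norm n, mul_one]
    have : ‖((ε : ℝ) : ℂ)/2‖ = ε/2 := by
      rw [norm_div]
      rw [Complex.norm_real, Real.norm_eq_abs, abs_of_pos hε]
      norm_num
    rw [this]
    linarith
  obtain ⟨w, hwK, φ, hφmono, hφtend⟩ := hK.isSeqCompact hzK
  set w' : E := (((ε : ℝ) : ℂ)/2)⁻¹ • w with hw'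
  have hTx_tend : Tendsto (fun k => T (x (φ k))) atTop (𝓝 w') := by
    have h1 : ∀ v : E, T v = (((ε : ℝ) : ℂ)/2)⁻¹ • T ((((ε : ℝ) : ℂ)/2) • v) := by
      intro v
      rw [ContinuousLinearMap.map_smul, smul_smul, inv_mul_cancel₀ hcε, one_smul]
    have h1' : (fun k => T (x (φ k)))
        = fun k => (((ε : ℝ) : ℂ)/2)⁻¹ • T ((((ε : ℝ) : ℂ)/2) • x (φ k)) :=
      funext fun k => h1 _
    rw [h1']
    exact hφtend.const_smul _
  have hlx_tend : Tendsto (fun k => l • x (φ k)) atTop (𝓝 w') := by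
    have h1 : ∀ k : ℕ, l • x (φ k)
        = (algebraMap ℂ (E →L[ℂ] E) l - T) (x (φ k)) + T (x (φ k)) := by
      intro k
      simp [Algebra.algebraMap_eq_smul_one, ContinuousLinearMap.sub_apply,
        ContinuousLinearMap.smul_apply]
    simp only [h1]
    have h2 := (htend0.comp hφmono.tendsto_atTop).add hTx_tend
    simpa using h2
  set f : E := l⁻¹ • w' with hf
  have hx_tend : Tendsto (fun k => x (φ k)) atTop (𝓝 f) := by
    have := hlx_tend.const_smul (l⁻¹)
    simpa only [smul_smul, inv_mul_cancel₀ hl0, one_smul] using this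
  have hf_norm : ‖f‖ = 1 := by
    have h1 : Tendsto (fun k => ‖x (φ k)‖) atTop (𝓝 ‖f‖) := hx_tend.norm
    have h3 : (fun k => ‖x (φ k)‖) = fun _ => (1:ℝ) := funext fun k => hx_norm _
    rw [h3] at h1
    exact tendsto_nhds_unique h1 tendsto_const_nhds
  have hf_ne : f ≠ 0 := by
    intro h
    rw [h, norm_zero] at hf_norm
    norm_num at hf_norm
  refine ⟨l, f, hf_ne, ?_, hlr⟩
  have h1 : Tendsto (fun k => T (x (φ k))) atTop (𝓝 (T f)) :=
    (T.continuous.tendsto f).comp hx_tend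
  have h2 : T f = w' := tendsto_nhds_unique h1 hTx_tend
  rw [h2, hf, smul_smul, mul_inv_cancel₀ hl0, one_smul]





/-- The Banach-space adjoint of an operator. -/
def dualOp (T : E →L[ℂ] E) : StrongDual ℂ E →L[ℂ] StrongDual ℂ E :=
  (ContinuousLinearMap.compL ℂ E E ℂ).flip T

@[simp] theorem dualOp_apply (T : E →L[ℂ] E) (φ : StrongDual ℂ E) : dualOp T φ = φ.comp T := rfl

set_option synthInstance.maxHeartbeats 200000 in
theorem dualOp_pow' (T : E →L[ℂ] E) (n : ℕ) : (dualOp T) ^ n = dualOp (T ^ n) := by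
  induction n with
  | zero =>
    ext φ v
    simp only [pow_zero, ContinuousLinearMap.one_apply, dualOp_apply,
      ContinuousLinearMap.comp_apply]
  | succ n ih =>
    rw [pow_succ, ih]
    ext φ v
    simp only [ContinuousLinearMap.mul_apply, dualOp_apply, ContinuousLinearMap.comp_apply]
    rw [pow_succ']
    simp only [ContinuousLinearMap.mul_apply]

theorem dualOp_pow (T : E →L[ℂ] E) (n : ℕ) (φ : StrongDual ℂ E) :
    ((dualOp T) ^ n) φ = φ.comp (T ^ n) := by
  rw [dualOp_pow']
  rfl

set_option synthInstance.maxHeartbeats 200000 in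
theorem norm_dualOp_pow (T : E →L[ℂ] E) (n : ℕ) : ‖(dualOp T) ^ n‖ = ‖T ^ n‖ := by
  apply le_antisymm
  · apply ContinuousLinearMap.opNorm_le_bound _ (norm_nonneg _)
    intro φ
    rw [dualOp_pow]
    calc ‖φ.comp (T ^ n)‖ ≤ ‖φ‖ * ‖T ^ n‖ := ContinuousLinearMap.opNorm_comp_le _ _
      _ = ‖T ^ n‖ * ‖φ‖ := mul_comm _ _
  · apply ContinuousLinearMap.opNorm_le_bound _ (norm_nonneg ((dualOp T) ^ n))
    intro v
    apply norm_le_dual_bound ℂ _ (by positivity)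
    intro φ
    calc ‖φ ((T ^ n) v)‖ = ‖(((dualOp T) ^ n) φ) v‖ := by rw [dualOp_pow]; rfl
      _ ≤ ‖((dualOp T) ^ n) φ‖ * ‖v‖ := ContinuousLinearMap.le_opNorm _ _
      _ ≤ (‖(dualOp T) ^ n‖ * ‖φ‖) * ‖v‖ := by
          apply mul_le_mul_of_nonneg_right _ (norm_nonneg _)
          exact ContinuousLinearMap.le_opNorm _ _
      _ = ‖(dualOp T) ^ n‖ * ‖v‖ * ‖φ‖ := by ring

theorem spectralRadius_dualOp (T : E →L[ℂ] E) :
    spectralRadius ℂ (dualOp T) = spectralRadius ℂ T := by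
  have h1 := spectrum.pow_nnnorm_pow_one_div_tendsto_nhds_spectralRadius (dualOp T)
  have h2 := spectrum.pow_nnnorm_pow_one_div_tendsto_nhds_spectralRadius T
  have h3 : (fun n : ℕ => (‖(dualOp T) ^ n‖₊ : ℝ≥0∞) ^ (1 / n : ℝ))
      = fun n : ℕ => (‖T ^ n‖₊ : ℝ≥0∞) ^ (1 / n : ℝ) := by
    funext n
    congr 2
    ext
    exact norm_dualOp_pow T n
  rw [h3] at h1
  exact tendsto_nhds_unique h1 h2

/-- **Schauder's theorem**: the adjoint of a compact operator is compact. -/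
theorem isCompactOperator_dualOp (T : E →L[ℂ] E) (hT : IsCompactOperator T) :
    IsCompactOperator (dualOp T) := by
  classical
  refine ⟨closure ((dualOp T) '' closedBall 0 1), ?_,
    Filter.mem_of_superset (closedBall_mem_nhds (0 : StrongDual ℂ E) one_pos)
      (fun φ hφ => subset_closure (Set.mem_image_of_mem _ hφ))⟩
  apply TotallyBounded.isCompact_of_isClosed _ isClosed_closure
  apply TotallyBounded.closure
  rw [Metric.totallyBounded_iff]
  intro ε hε
  -- get a compact set K containing the image of a small ball
  obtain ⟨K, hK, hKmem⟩ := hT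
  obtain ⟨r, hr, hball⟩ := Metric.mem_nhds_iff.mp hKmem
  -- a finite δ-net of K inside K
  set δ : ℝ := ε * r / 16 with hδ
  have hδpos : 0 < δ := by positivity
  obtain ⟨t, hts, htf, hcov⟩ := totallyBounded_iff_subset.mp hK.totallyBounded
    {p : E × E | dist p.1 p.2 < δ} (Metric.dist_mem_uniformity hδpos)
  haveI := htf.fintype
  -- bound for elements of t
  obtain ⟨R, hR⟩ := hK.isBounded.subset_closedBall 0
  have htR : ∀ y ∈ t, ‖y‖ ≤ |R| := by
    intro y hy
    have := hR (hts hy)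
    rw [mem_closedBall, dist_zero_right] at this
    exact this.trans (le_abs_self R)
  -- evaluation map into a finite-dimensional space
  set ev : StrongDual ℂ E → (↥t → ℂ) := fun φ i => φ i with hev
  have hev_bdd : ev '' closedBall 0 1 ⊆ closedBall 0 |R| := by
    rintro _ ⟨φ, hφ, rfl⟩
    rw [mem_closedBall, dist_zero_right]
    rw [mem_closedBall, dist_zero_right] at hφ
    apply pi_norm_le_iff_of_nonneg (abs_nonneg R) |>.mpr
    intro i
    calc ‖φ i‖ ≤ ‖φ‖ * ‖(i : E)‖ := ContinuousLinearMap.le_opNorm _ _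
      _ ≤ 1 * |R| := by
          apply mul_le_mul hφ (htR _ i.2) (norm_nonneg _) zero_le_one
      _ = |R| := one_mul _
  have hTB : TotallyBounded (ev '' closedBall 0 1) :=
    (isCompact_closedBall (0 : ↥t → ℂ) |R|).totallyBounded.subset hev_bdd
  set δ' : ℝ := ε * r / 8 with hδ'
  have hδ'pos : 0 < δ' := by positivity
  obtain ⟨s, hs_sub, hs_fin, hs_cov⟩ := totallyBounded_iff_subset.mp hTB
    {p : (↥t → ℂ) × (↥t → ℂ) | dist p.1 p.2 < δ'} (Metric.dist_mem_uniformity hδ'pos)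
  -- choose representatives
  have hrep : ∀ c ∈ s, ∃ ψ : StrongDual ℂ E, ψ ∈ closedBall 0 1 ∧ ev ψ = c := by
    intro c hc
    obtain ⟨ψ, hψ, hψc⟩ := hs_sub hc
    exact ⟨ψ, hψ, hψc⟩
  choose rep hrep1 hrep2 using hrep
  refine ⟨{ x | ∃ c, ∃ hc : c ∈ s, dualOp T (rep c hc) = x },
    hs_fin.dependent_image _, ?_⟩
  rintro _ ⟨φ, hφ, rfl⟩
  have hφ1 : ‖φ‖ ≤ 1 := by rwa [mem_closedBall, dist_zero_right] at hφ
  have hevφ : ev φ ∈ ⋃ c ∈ s, {x | (x, c) ∈ {p : (↥t → ℂ) × (↥t → ℂ) | dist p.1 p.2 < δ'}} :=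
    hs_cov (Set.mem_image_of_mem _ hφ)
  rw [Set.mem_iUnion₂] at hevφ
  obtain ⟨c, hc, hdist⟩ := hevφ
  rw [Set.mem_iUnion₂]
  refine ⟨dualOp T (rep c hc), ⟨⟨c, hc, rfl⟩, ?_⟩⟩
  -- estimate the distance
  rw [mem_ball, dist_eq_norm]
  set ψ := rep c hc with hψ
  have hψ1 : ‖ψ‖ ≤ 1 := by
    have := hrep1 c hc
    rwa [mem_closedBall, dist_zero_right] at this
  have hptwise : ∀ y ∈ t, ‖φ y - ψ y‖ ≤ δ' := by
    intro y hy
    have h1 : dist (ev φ ⟨y, hy⟩) (c ⟨y, hy⟩) ≤ dist (ev φ) c := dist_le_pi_dist _ _ _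
    have h2 : dist (ev φ) c < δ' := hdist
    have h3 : c ⟨y, hy⟩ = ev ψ ⟨y, hy⟩ := by rw [hrep2 c hc]
    rw [h3] at h1
    have : dist (φ y) (ψ y) ≤ dist (ev φ) c := h1
    rw [dist_eq_norm] at this
    exact this.trans (le_of_lt h2)
  have hbound : ∀ v : E, ‖(dualOp T φ - dualOp T ψ) v‖ ≤ (ε/2) * ‖v‖ := by
    intro v
    rcases eq_or_ne v 0 with rfl | hv
    · simp
    have hvpos : (0:ℝ) < ‖v‖ := norm_pos_iff.mpr hv
    -- rescale to land in the ball of radius r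
    set a : ℂ := ((r:ℂ)/2) * (((‖v‖:ℝ):ℂ))⁻¹ with ha
    have hr0 : ((r:ℝ):ℂ) ≠ 0 := by exact_mod_cast ne_of_gt hr
    have hv0 : ((‖v‖:ℝ):ℂ) ≠ 0 := by exact_mod_cast ne_of_gt hvpos
    have ha0 : a ≠ 0 := mul_ne_zero (div_ne_zero hr0 (by norm_num)) (inv_ne_zero hv0)
    have hnorm_a : ‖a‖ = r/2 * ‖v‖⁻¹ := by
      rw [ha, norm_mul, norm_div, norm_inv, Complex.norm_real, Complex.norm_real,
        Real.norm_eq_abs, Real.norm_eq_abs, abs_of_pos hr, abs_of_pos hvpos]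
      norm_num
    have hapos : (0:ℝ) < ‖a‖ := norm_pos_iff.mpr ha0
    set u : E := a • v with hu
    have hu_mem : u ∈ ball (0 : E) r := by
      rw [mem_ball_zero_iff, hu, norm_smul, hnorm_a]
      rw [mul_assoc, inv_mul_cancel₀ (ne_of_gt hvpos), mul_one]
      linarith
    have hTu : T u ∈ K := hball hu_mem
    obtain ⟨y, hy, hydist⟩ := Set.mem_iUnion₂.mp (hcov hTu)
    have hydist' : ‖T u - y‖ < δ := by
      have : dist (T u) y < δ := hydist
      rwa [dist_eq_norm] at this
    have hest : ‖φ (T u) - ψ (T u)‖ ≤ 2 * δ + δ' := by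
      calc ‖φ (T u) - ψ (T u)‖
          = ‖(φ (T u) - φ y) + (φ y - ψ y) + (ψ y - ψ (T u))‖ := by ring_nf
        _ ≤ ‖(φ (T u) - φ y) + (φ y - ψ y)‖ + ‖ψ y - ψ (T u)‖ := norm_add_le _ _
        _ ≤ ‖φ (T u) - φ y‖ + ‖φ y - ψ y‖ + ‖ψ y - ψ (T u)‖ := by
            have := norm_add_le (φ (T u) - φ y) (φ y - ψ y)
            linarith
        _ ≤ ‖φ‖ * ‖T u - y‖ + δ' + ‖ψ‖ * ‖y - T u‖ := by
            have h1 : φ (T u) - φ y = φ (T u - y) := by rw [map_sub]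
            have h2 : ψ y - ψ (T u) = ψ (y - T u) := by rw [map_sub]
            have h3 := ContinuousLinearMap.le_opNorm φ (T u - y)
            have h4 := ContinuousLinearMap.le_opNorm ψ (y - T u)
            have h5 : ‖φ y - ψ y‖ ≤ δ' := hptwise y hy
            rw [h1, h2]
            gcongr
        _ ≤ 1 * δ + δ' + 1 * δ := by
            have h6 : ‖y - T u‖ < δ := by rwa [norm_sub_rev] at hydist'
            have h7 := mul_le_mul hφ1 (le_of_lt hydist') (norm_nonneg _) zero_le_one
            have h8 := mul_le_mul hψ1 (le_of_lt h6) (norm_nonneg _) zero_le_one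
            linarith
        _ = 2 * δ + δ' := by ring
    have hTu_eq : T u = a • T v := by rw [hu, ContinuousLinearMap.map_smul]
    have hsub : φ (T u) - ψ (T u) = a * (φ (T v) - ψ (T v)) := by
      rw [hTu_eq, ContinuousLinearMap.map_smul, ContinuousLinearMap.map_smul, smul_eq_mul, smul_eq_mul]
      ring
    have hfin : ‖φ (T v) - ψ (T v)‖ * ‖a‖ ≤ 2*δ + δ' := by
      calc ‖φ (T v) - ψ (T v)‖ * ‖a‖ = ‖a‖ * ‖φ (T v) - ψ (T v)‖ := mul_comm _ _
        _ = ‖a * (φ (T v) - ψ (T v))‖ := (norm_mul _ _).symm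
        _ = ‖φ (T u) - ψ (T u)‖ := by rw [hsub]
        _ ≤ 2*δ + δ' := hest
    have happ : (dualOp T φ - dualOp T ψ) v = φ (T v) - ψ (T v) := by
      simp [ContinuousLinearMap.sub_apply]
    rw [happ]
    have hX : ‖φ (T v) - ψ (T v)‖ ≤ (2*δ+δ') / ‖a‖ := (le_div_iff₀ hapos).mpr hfin
    have hEq : (2*δ+δ') / ‖a‖ = (ε/2) * ‖v‖ := by
      rw [hnorm_a, hδ, hδ']
      field_simp
      ring
    linarith
  have hop : ‖dualOp T φ - dualOp T ψ‖ ≤ ε/2 :=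
    ContinuousLinearMap.opNorm_le_bound _ (by positivity) hbound
  calc ‖dualOp T φ - dualOp T ψ‖ ≤ ε/2 := hop
    _ < ε := by linarith


section Concrete

variable {Ω : Type*} [MeasurableSpace Ω] {μ : Measure Ω} [IsProbabilityMeasure μ]
  {q p : ℝ≥0∞} [Fact (1 ≤ q)] [Fact (1 ≤ p)]

/-- The element of `L^q` determined by an element of `L^p`, `q ≤ p`. -/
def inclFun (hqp : q ≤ p) (f : Lp ℂ p μ) : Lp ℂ q μ :=
  ((Lp.memLp f).mono_exponent hqp).toLp f

theorem inclFun_ae (hqp : q ≤ p) (f : Lp ℂ p μ) : inclFun hqp f =ᵐ[μ] f :=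
  MemLp.coeFn_toLp _

theorem norm_inclFun_le (hqp : q ≤ p) (f : Lp ℂ p μ) : ‖inclFun hqp f‖ ≤ ‖f‖ := by
  rw [inclFun, Lp.norm_toLp, Lp.norm_def]
  apply ENNReal.toReal_mono (Lp.memLp f).2.ne
  exact eLpNorm_le_eLpNorm_of_exponent_le hqp (Lp.aestronglyMeasurable f)

/-- The inclusion `L^p ↪ L^q` as a continuous linear map. -/
def incl (hqp : q ≤ p) : Lp ℂ p μ →L[ℂ] Lp ℂ q μ :=
  LinearMap.mkContinuous
    { toFun := inclFun hqp
      map_add' := by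
        intro f g
        apply Lp.ext
        filter_upwards [inclFun_ae hqp (f + g), inclFun_ae hqp f, inclFun_ae hqp g,
          Lp.coeFn_add f g, Lp.coeFn_add (inclFun hqp f) (inclFun hqp g)] with x h1 h2 h3 h4 h5
        rw [h1, h4, h5]
        simp [h2, h3]
      map_smul' := by
        intro c f
        simp only [RingHom.id_apply]
        apply Lp.ext
        filter_upwards [inclFun_ae hqp (c • f), inclFun_ae hqp f,
          Lp.coeFn_smul c f, Lp.coeFn_smul c (inclFun hqp f)] with x h1 h2 h3 h4
        rw [h1, h3, h4]
        simp [h2] }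
    1 (fun f => by simpa using norm_inclFun_le hqp f)

theorem incl_ae (hqp : q ≤ p) (f : Lp ℂ p μ) : incl hqp f =ᵐ[μ] f := inclFun_ae hqp f

theorem incl_ne_zero (hqp : q ≤ p) {f : Lp ℂ p μ} (hf : f ≠ 0) : incl hqp f ≠ 0 := by
  intro h
  apply hf
  apply Lp.ext (g := (0 : Lp ℂ p μ))
  have h1 : (incl hqp f : Ω → ℂ) =ᵐ[μ] 0 := by
    rw [h]; exact Lp.coeFn_zero ℂ q μ
  filter_upwards [incl_ae hqp f, h1, Lp.coeFn_zero ℂ p μ] with x h2 h3 h4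
  rw [← h2, h3, h4]

theorem denseRange_incl (hqp : q ≤ p) (hq : q ≠ ∞) : DenseRange (incl (μ := μ) hqp) := by
  have h1 : Set.range ((↑) : Lp.simpleFunc ℂ q μ → Lp ℂ q μ) ⊆ Set.range (incl (μ := μ) hqp) := by
    rintro _ ⟨g, rfl⟩
    have hmem : MemLp (Lp.simpleFunc.toSimpleFunc g) p μ :=
      (Lp.simpleFunc.toSimpleFunc g).memLp_of_isFiniteMeasure p μ
    refine ⟨hmem.toLp _, ?_⟩
    apply Lp.ext
    filter_upwards [incl_ae hqp (hmem.toLp _), hmem.coeFn_toLp,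
      Lp.simpleFunc.toSimpleFunc_eq_toFun g] with x h2 h3 h4
    rw [h2, h3, h4]
  have h2 : Dense (Set.range ((↑) : Lp.simpleFunc ℂ q μ → Lp ℂ q μ)) :=
    Lp.simpleFunc.denseRange hq
  exact h2.mono h1

theorem nontrivial_Lp : Nontrivial (Lp ℂ p μ) := by
  refine ⟨(memLp_const (1:ℂ)).toLp (fun _ => (1:ℂ)), 0, fun h => ?_⟩
  have h1 : (fun _ : Ω => (1:ℂ)) =ᵐ[μ] 0 := by
    have h2 := (memLp_const (μ := μ) (p := p) (1:ℂ)).coeFn_toLp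
    rw [h] at h2
    exact (h2.symm.trans (Lp.coeFn_zero ℂ p μ)).symm.symm
  obtain ⟨x, hx⟩ := h1.exists
  simpa using hx

end Concrete

end SRAux

open SRAux in
/-- If the integral kernel operator of a nonnegative kernel `Γ` is a
compact operator both on `L^q(Ω)` and on `L^p(Ω)` for `1 ≤ q ≤ p < ∞`, then the two
spectral radii agree. -/
theorem spectralRadius_eq_of_compact
    {Ω : Type*} [MeasurableSpace Ω] (μ : Measure Ω) [IsProbabilityMeasure μ]
    (q p : ℝ≥0∞) [Fact (1 ≤ q)] [Fact (1 ≤ p)] (hqp : q ≤ p) (hp : p ≠ ∞)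
    (Γ : Ω × Ω → ℝ) (hmeas : Measurable Γ) (hnonneg : ∀ z, 0 ≤ Γ z)
    (Tq : Lp ℂ q μ →L[ℂ] Lp ℂ q μ) (Tp : Lp ℂ p μ →L[ℂ] Lp ℂ p μ)
    (hTq : ∀ f : Lp ℂ q μ, ∀ᵐ x ∂μ, Tq f x = ∫ y, f y * (Γ (y, x) : ℂ) ∂μ)
    (hTp : ∀ f : Lp ℂ p μ, ∀ᵐ x ∂μ, Tp f x = ∫ y, f y * (Γ (y, x) : ℂ) ∂μ)
    (hKq : IsCompactOperator Tq) (hKp : IsCompactOperator Tp) :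
    spectralRadius ℂ Tp = spectralRadius ℂ Tq := by
  have hq_ne : q ≠ ∞ := (lt_of_le_of_lt hqp (lt_top_iff_ne_top.mpr hp)).ne
  haveI hntq : Nontrivial (Lp ℂ q μ) := nontrivial_Lp
  haveI hntp : Nontrivial (Lp ℂ p μ) := nontrivial_Lp
  have hcomm : ∀ f : Lp ℂ p μ, Tq (incl hqp f) = incl hqp (Tp f) := by
    intro f
    apply Lp.ext
    have hint : ∀ x, ∫ y, (incl hqp f : Ω → ℂ) y * (Γ (y, x) : ℂ) ∂μ
        = ∫ y, (f : Ω → ℂ) y * (Γ (y, x) : ℂ) ∂μ := by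
      intro x
      apply integral_congr_ae
      filter_upwards [incl_ae hqp f] with y hy
      rw [hy]
    filter_upwards [hTq (incl hqp f), hTp f, incl_ae hqp (Tp f)] with x h1 h2 h3
    rw [h1, hint x, ← h2, h3]
  apply le_antisymm
  · by_cases hz : spectralRadius ℂ Tp = 0
    · rw [hz]; exact zero_le
    obtain ⟨l, f, hf0, hTf, hlr⟩ := exists_eigen_of_compact Tp hKp hz
    have hg0 : incl hqp f ≠ 0 := incl_ne_zero hqp hf0
    have hTg : Tq (incl hqp f) = l • incl hqp f := by
      rw [hcomm f, hTf]
      exact (incl hqp).map_smul l f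
    have hmem := mem_spectrum_of_eigen Tq hg0 hTg
    rw [← hlr]
    exact nnnorm_le_spectralRadius_of_mem hmem
  · by_cases hz : spectralRadius ℂ Tq = 0
    · rw [hz]; exact zero_le
    haveI : Nontrivial (StrongDual ℂ (Lp ℂ q μ)) := by
      obtain ⟨x, hx⟩ := exists_ne (0 : Lp ℂ q μ)
      obtain ⟨g, hg1, hg2⟩ := exists_dual_vector ℂ x (norm_ne_zero_iff.mpr hx)
      refine ⟨g, 0, fun h => ?_⟩
      rw [h] at hg2
      simp only [ContinuousLinearMap.zero_apply] at hg2
      have h0 : ((‖x‖ : ℝ) : ℂ) = 0 := hg2.symm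
      have : ‖x‖ = 0 := by exact_mod_cast h0
      exact hx (norm_eq_zero.mp this)
    obtain ⟨l, φ, hφ0, hSφ, hlr⟩ := exists_eigen_of_compact (dualOp Tq)
      (isCompactOperator_dualOp Tq hKq) (by rw [spectralRadius_dualOp]; exact hz)
    set ψ : StrongDual ℂ (Lp ℂ p μ) := φ.comp (incl hqp) with hψ
    have hψ0 : ψ ≠ 0 := by
      intro h
      apply hφ0
      have hvanish : ∀ g : Lp ℂ q μ, φ g = 0 := by
        intro g
        have hclosed : IsClosed {g : Lp ℂ q μ | φ g = 0} :=
          isClosed_eq φ.continuous continuous_const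
        have hrange : Set.range (incl (μ := μ) hqp) ⊆ {g | φ g = 0} := by
          rintro _ ⟨f, rfl⟩
          have := DFunLike.congr_fun h f
          simpa [hψ] using this
        have hdense := denseRange_incl (μ := μ) hqp hq_ne
        have huniv : closure (Set.range (incl (μ := μ) hqp)) = Set.univ :=
          hdense.closure_range
        have hsub := hclosed.closure_subset_iff.mpr hrange
        rw [huniv] at hsub
        exact hsub (Set.mem_univ g)
      exact ContinuousLinearMap.ext fun g => by simp [hvanish g]
    have hSpψ : dualOp Tp ψ = l • ψ := by
      ext f
      have h1 : dualOp Tp ψ f = ψ (Tp f) := rfl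
      have h2 : ψ (Tp f) = φ (incl hqp (Tp f)) := rfl
      rw [h1, h2, ← hcomm f]
      have h3 : φ (Tq (incl hqp f)) = (dualOp Tq φ) (incl hqp f) := rfl
      rw [h3, hSφ]
      simp [hψ]
    have hmem := mem_spectrum_of_eigen (dualOp Tp) hψ0 hSpψ
    have hle := nnnorm_le_spectralRadius_of_mem hmem
    rw [spectralRadius_dualOp] at hle
    rw [← spectralRadius_dualOp Tq, ← hlr]
    exact hle
end
end

section
/- Let (Ω,μ) be a probability space, let p ∈ [2,∞), and let W be an L^p-digraphon on Ω, i.e., a nonnegative function in L^p(Ω², μ×μ). Define the kernel powers W^k by W^1 = W and W^{k}(x,y) = ∫ W^{k−1}(x,z) W(z,y) dμ(z). Then the spectral radius of the integral kernel operator of W on L^p(Ω) satisfies ρ_p(W) = lim_{k→∞} (‖W^k‖_p)^{1/k}, where ‖·‖_p is the L^p(Ω²) norm. -/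
open MeasureTheory ENNReal Filter Topology

noncomputable section

/-- Composition of two kernels: `(A * B)(x,y) = ∫ A(x,z) B(z,y) dμ(z)`. -/
def kcomp {Ω : Type*} [MeasurableSpace Ω] (μ : Measure Ω) (A B : Ω × Ω → ℝ) :
    Ω × Ω → ℝ :=
  fun p => ∫ z, A (p.1, z) * B (z, p.2) ∂μ

/-- Kernel powers: `kpow μ W k` is the `(k+1)`-st power `W^{k+1}` of the kernel `W`,
i.e. `kpow μ W 0 = W` and `W^{k+1}(x,y) = ∫ W^k(x,z) W(z,y) dμ(z)`. -/
def kpow {Ω : Type*} [MeasurableSpace Ω] (μ : Measure Ω) (W : Ω × Ω → ℝ) :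
    ℕ → Ω × Ω → ℝ
  | 0 => W
  | k + 1 => kcomp μ (kpow μ W k) W

section Aux

lemma eLpNorm_eq_lintegral_rpow_nnnorm {α F : Type*} [MeasurableSpace α] {μ : Measure α}
    [NormedAddCommGroup F] {p : ℝ≥0∞} (hp0 : p ≠ 0) (hptop : p ≠ ∞) {f : α → F} :
    eLpNorm f p μ = (∫⁻ x, (‖f x‖₊ : ℝ≥0∞) ^ p.toReal ∂μ) ^ (1 / p.toReal) :=
  eLpNorm_eq_lintegral_rpow_enorm_toReal hp0 hptop

variable {Ω : Type*} [MeasurableSpace Ω] {μ : Measure Ω} [IsProbabilityMeasure μ]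

lemma kcomp_measurable {A B : Ω × Ω → ℝ} (hA : Measurable A) (hB : Measurable B) :
    Measurable (kcomp μ A B) := by
  have h : Measurable (fun q : (Ω × Ω) × Ω => A (q.1.1, q.2) * B (q.2, q.1.2)) :=
    (hA.comp (measurable_fst.fst.prodMk measurable_snd)).mul
      (hB.comp (measurable_snd.prodMk measurable_fst.snd))
  exact h.stronglyMeasurable.integral_prod_right'.measurable

lemma kpow_measurable {W : Ω × Ω → ℝ} (hW : Measurable W) (k : ℕ) :
    Measurable (kpow μ W k) := by
  induction k with
  | zero => exact hW
  | succ k ih => exact kcomp_measurable ih hW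

lemma kpow_nonneg {W : Ω × Ω → ℝ} (hW : ∀ z, 0 ≤ W z) (k : ℕ) :
    ∀ z, 0 ≤ kpow μ W k z := by
  induction k with
  | zero => exact hW
  | succ k ih =>
    intro z
    exact integral_nonneg fun t => mul_nonneg (ih _) (hW _)

/-- ofReal preserves eLpNorm. -/
lemma eLpNorm_ofReal_complex (f : Ω → ℝ) (p : ℝ≥0∞) (μ : Measure Ω) :
    eLpNorm (fun x => ((f x : ℝ) : ℂ)) p μ = eLpNorm f p μ := by
  rw [← eLpNorm_norm (fun x => ((f x : ℝ) : ℂ)), ← eLpNorm_norm f]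
  simp [Complex.norm_real]

lemma lint_sections_right {p : ℝ≥0∞} (hp0 : p ≠ 0) (hptop : p ≠ ∞) {K : Ω × Ω → ℝ}
    (hK : Measurable K) (hfin : eLpNorm K p (μ.prod μ) ≠ ∞) :
    ∀ᵐ x ∂μ, MemLp (fun y => K (x, y)) p μ := by
  have hq0 : 0 < p.toReal := ENNReal.toReal_pos hp0 hptop
  have hmeas : Measurable fun z : Ω × Ω => (‖K z‖₊ : ℝ≥0∞) ^ p.toReal :=
    hK.enorm.pow_const _
  have h1 : ∫⁻ x, ∫⁻ y, (‖K (x, y)‖₊ : ℝ≥0∞) ^ p.toReal ∂μ ∂μ ≠ ∞ := by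
    rw [← lintegral_prod _ hmeas.aemeasurable]
    intro h
    rw [eLpNorm_eq_lintegral_rpow_nnnorm hp0 hptop, h,
      ENNReal.top_rpow_of_pos (by positivity)] at hfin
    exact hfin rfl
  have h2 : ∀ᵐ x ∂μ, ∫⁻ y, (‖K (x, y)‖₊ : ℝ≥0∞) ^ p.toReal ∂μ < ∞ :=
    ae_lt_top hmeas.lintegral_prod_right' h1
  filter_upwards [h2] with x hx
  refine ⟨(hK.comp measurable_prodMk_left).aestronglyMeasurable, ?_⟩
  rw [eLpNorm_eq_lintegral_rpow_nnnorm hp0 hptop]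
  exact ENNReal.rpow_lt_top_of_nonneg (by positivity) hx.ne

lemma eLpNorm_swap {K : Ω × Ω → ℝ} {p : ℝ≥0∞} (hp0 : p ≠ 0) (hptop : p ≠ ∞) :
    eLpNorm (fun z : Ω × Ω => K (z.2, z.1)) p (μ.prod μ) = eLpNorm K p (μ.prod μ) := by
  rw [eLpNorm_eq_lintegral_rpow_nnnorm hp0 hptop,
    eLpNorm_eq_lintegral_rpow_nnnorm hp0 hptop]
  congr 1
  exact lintegral_prod_swap fun z => (‖K z‖₊ : ℝ≥0∞) ^ p.toReal

lemma lint_sections_left {p : ℝ≥0∞} (hp0 : p ≠ 0) (hptop : p ≠ ∞) {K : Ω × Ω → ℝ}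
    (hK : Measurable K) (hfin : eLpNorm K p (μ.prod μ) ≠ ∞) :
    ∀ᵐ x ∂μ, MemLp (fun y => K (y, x)) p μ := by
  have := lint_sections_right (μ := μ) hp0 hptop
    (K := fun z : Ω × Ω => K (z.2, z.1)) (hK.comp measurable_swap) ?_
  · exact this
  · rw [eLpNorm_swap hp0 hptop]; exact hfin

end Aux

set_option maxHeartbeats 2000000 in
/-- For an `L^p`-digraphon `W` (`2 ≤ p < ∞`), the spectral radius of
its integral kernel operator on `L^p(Ω)` satisfies the Gelfand-type formula
`ρ_p(W) = lim_k (‖W^k‖_p)^{1/k}` (below, `kpow μ W k = W^{k+1}`). -/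
theorem gelfand_formula_Lp
    {Ω : Type*} [MeasurableSpace Ω] (μ : Measure Ω) [IsProbabilityMeasure μ]
    (p : ℝ≥0∞) [Fact (1 ≤ p)] (hp2 : 2 ≤ p) (hptop : p ≠ ∞)
    (W : Ω × Ω → ℝ) (hmeas : Measurable W) (hnonneg : ∀ z, 0 ≤ W z)
    (hW : MemLp W p (μ.prod μ))
    -- the integral kernel operator of `W` on `L^p(Ω)`
    (T : Lp ℂ p μ →L[ℂ] Lp ℂ p μ)
    (hT : ∀ f : Lp ℂ p μ, ∀ᵐ x ∂μ, T f x = ∫ y, f y * (W (y, x) : ℂ) ∂μ) :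
    Tendsto (fun k : ℕ => (eLpNorm (kpow μ W k) p (μ.prod μ)) ^ (((k : ℝ) + 1)⁻¹))
      atTop (𝓝 (spectralRadius ℂ T)) := by
  classical
  have hp1 : (1:ℝ≥0∞) ≤ p := Fact.out
  have hp0 : p ≠ 0 := by
    intro h
    rw [h] at hp1
    simp at hp1
  set ν := μ.prod μ with hν
  set q := p.toReal with hqdef
  have hq2 : (2:ℝ) ≤ q := by
    have h := ENNReal.toReal_mono hptop hp2
    simpa using h
  have hq0 : (0:ℝ) < q := lt_of_lt_of_le two_pos hq2
  have hKm : ∀ k, Measurable (kpow μ W k) := kpow_measurable hmeas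
  have hKnn : ∀ k, ∀ z, 0 ≤ kpow μ W k z := kpow_nonneg hnonneg
  set C := eLpNorm W p ν with hCdef
  have hCfin : C ≠ ∞ := hW.2.ne
  have hWsec : ∀ᵐ x ∂μ, MemLp (fun y => W (x, y)) p μ :=
    lint_sections_right hp0 hptop hmeas hCfin
  set g : Ω → Lp ℂ p μ := fun x =>
    if h : MemLp (fun y => ((W (x, y) : ℝ) : ℂ)) p μ then h.toLp _ else 0 with hgdef
  have enorm_Lp : ∀ f : Lp ℂ p μ, (‖f‖₊ : ℝ≥0∞) = eLpNorm (⇑f) p μ := fun f => by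
    rw [Lp.nnnorm_def, ENNReal.coe_toNNReal (Lp.eLpNorm_ne_top f)]
  -- Step B : kernel sections represent `T^k` applied to sections of `W`
  have hB : ∀ k : ℕ, ∀ᵐ x ∂μ,
      ⇑((T ^ k) (g x)) =ᵐ[μ] fun y => ((kpow μ W k (x, y) : ℝ) : ℂ) := by
    intro k
    induction k with
    | zero =>
      filter_upwards [hWsec] with x hx
      have hx' : MemLp (fun y => ((W (x, y) : ℝ) : ℂ)) p μ := hx.ofReal
      have hgx : g x = hx'.toLp _ := dif_pos hx'
      rw [pow_zero, ContinuousLinearMap.one_apply, hgx]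
      exact hx'.coeFn_toLp
    | succ k ih =>
      filter_upwards [ih] with x hx
      have h1 : (T ^ (k+1)) (g x) = T ((T ^ k) (g x)) := by
        rw [pow_succ']; rfl
      rw [h1]
      filter_upwards [hT ((T ^ k) (g x))] with y hy
      rw [hy]
      calc ∫ z, ((T ^ k) (g x)) z * ((W (z, y) : ℝ) : ℂ) ∂μ
          = ∫ z, ((kpow μ W k (x, z) : ℝ) : ℂ) * ((W (z, y) : ℝ) : ℂ) ∂μ := by
            refine integral_congr_ae ?_
            filter_upwards [hx] with z hz
            rw [hz]
        _ = ((kpow μ W (k+1) (x, y) : ℝ) : ℂ) := by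
            show _ = ((∫ z, kpow μ W k (x, z) * W (z, y) ∂μ : ℝ) : ℂ)
            have hz : ∀ z, ((kpow μ W k (x, z) : ℝ) : ℂ) * ((W (z, y) : ℝ) : ℂ)
                = (((kpow μ W k (x, z) * W (z, y) : ℝ)) : ℂ) := by
              intro z; push_cast; ring
            simp_rw [hz]
            exact integral_ofReal
  have hgnorm : ∀ᵐ x ∂μ, (‖g x‖₊ : ℝ≥0∞) = eLpNorm (fun y => W (x, y)) p μ := by
    filter_upwards [hWsec] with x hx
    have hx' : MemLp (fun y => ((W (x, y) : ℝ) : ℂ)) p μ := hx.ofReal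
    have hgx : g x = hx'.toLp _ := dif_pos hx'
    rw [enorm_Lp, hgx, eLpNorm_congr_ae hx'.coeFn_toLp, eLpNorm_ofReal_complex]
  have hsec : ∀ k : ℕ, ∀ᵐ x ∂μ,
      eLpNorm (fun y => kpow μ W k (x, y)) p μ = (‖(T ^ k) (g x)‖₊ : ℝ≥0∞) := by
    intro k
    filter_upwards [hB k] with x hx
    rw [enorm_Lp, eLpNorm_congr_ae hx, eLpNorm_ofReal_complex]
  -- upper bound on kernel norms
  have hab : ∀ k : ℕ, eLpNorm (kpow μ W k) p ν
      ≤ (‖(T ^ k : Lp ℂ p μ →L[ℂ] Lp ℂ p μ)‖₊ : ℝ≥0∞) * C := by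
    intro k
    have hmk : Measurable fun z : Ω × Ω => (‖kpow μ W k z‖₊ : ℝ≥0∞) ^ q :=
      (hKm k).enorm.pow_const _
    have collapse : ∀ (a : ℝ≥0∞), (a ^ (1/q)) ^ q = a := by
      intro a
      rw [← ENNReal.rpow_mul, one_div, inv_mul_cancel₀ hq0.ne', ENNReal.rpow_one]
    have key : ∫⁻ z, (‖kpow μ W k z‖₊ : ℝ≥0∞) ^ q ∂ν
        ≤ (‖(T ^ k : Lp ℂ p μ →L[ℂ] Lp ℂ p μ)‖₊ : ℝ≥0∞) ^ q * C ^ q := by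
      rw [lintegral_prod _ hmk.aemeasurable]
      have e1 : ∫⁻ x, ∫⁻ y, (‖kpow μ W k (x, y)‖₊ : ℝ≥0∞) ^ q ∂μ ∂μ
          = ∫⁻ x, (‖(T ^ k) (g x)‖₊ : ℝ≥0∞) ^ q ∂μ := by
        refine lintegral_congr_ae ?_
        filter_upwards [hsec k] with x hx
        rw [← hx, eLpNorm_eq_lintegral_rpow_nnnorm hp0 hptop, collapse]
      rw [e1]
      have e2 : ∫⁻ x, (‖g x‖₊ : ℝ≥0∞) ^ q ∂μ = C ^ q := by
        have e3 : ∫⁻ x, (‖g x‖₊ : ℝ≥0∞) ^ q ∂μ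
            = ∫⁻ x, ∫⁻ y, (‖W (x, y)‖₊ : ℝ≥0∞) ^ q ∂μ ∂μ := by
          refine lintegral_congr_ae ?_
          filter_upwards [hgnorm] with x hx
          rw [hx, eLpNorm_eq_lintegral_rpow_nnnorm hp0 hptop, collapse]
        rw [e3, ← lintegral_prod (fun z => (‖W z‖₊ : ℝ≥0∞) ^ q) (hmeas.enorm.pow_const _).aemeasurable,
          hCdef, eLpNorm_eq_lintegral_rpow_nnnorm hp0 hptop, collapse]
      calc ∫⁻ x, (‖(T ^ k) (g x)‖₊ : ℝ≥0∞) ^ q ∂μ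
          ≤ ∫⁻ x, ((‖(T ^ k : Lp ℂ p μ →L[ℂ] Lp ℂ p μ)‖₊ : ℝ≥0∞)
              * (‖g x‖₊ : ℝ≥0∞)) ^ q ∂μ := by
            refine lintegral_mono fun x => ?_
            gcongr
            exact_mod_cast ContinuousLinearMap.le_opNNNorm _ _
        _ = (‖(T ^ k : Lp ℂ p μ →L[ℂ] Lp ℂ p μ)‖₊ : ℝ≥0∞) ^ q
              * ∫⁻ x, (‖g x‖₊ : ℝ≥0∞) ^ q ∂μ := by
            simp_rw [ENNReal.mul_rpow_of_nonneg _ _ hq0.le]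
            exact lintegral_const_mul' _ _
              (ENNReal.rpow_ne_top_of_nonneg hq0.le ENNReal.coe_ne_top)
        _ = _ := by rw [e2]
    rw [eLpNorm_eq_lintegral_rpow_nnnorm hp0 hptop]
    calc (∫⁻ z, (‖kpow μ W k z‖₊ : ℝ≥0∞) ^ q ∂ν) ^ (1/q)
        ≤ ((‖(T ^ k : Lp ℂ p μ →L[ℂ] Lp ℂ p μ)‖₊ : ℝ≥0∞) ^ q * C ^ q) ^ (1/q) :=
          ENNReal.rpow_le_rpow key (by positivity)
      _ = _ := by
          rw [ENNReal.mul_rpow_of_nonneg _ _ (by positivity), ← ENNReal.rpow_mul,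
            ← ENNReal.rpow_mul, mul_one_div_cancel hq0.ne', ENNReal.rpow_one,
            ENNReal.rpow_one]
  have hafin : ∀ k : ℕ, eLpNorm (kpow μ W k) p ν ≠ ∞ := by
    intro k
    refine ((hab k).trans_lt ?_).ne
    exact ENNReal.mul_lt_top ENNReal.coe_lt_top hCfin.lt_top
  -- Step R : kernel representation of the powers of `T`
  have hR : ∀ k : ℕ, ∀ f : Lp ℂ p μ, ∀ᵐ x ∂μ,
      ((T ^ (k+1)) f : Lp ℂ p μ) x = ∫ y, f y * ((kpow μ W k (y, x) : ℝ) : ℂ) ∂μ := by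
    have rpow_ne_top : ∀ {a : ℝ≥0∞} {r : ℝ}, 0 < r → a ^ r ≠ ∞ → a ≠ ∞ := by
      intro a r hr h ha
      rw [ha, ENNReal.top_rpow_of_pos hr] at h
      exact h rfl
    intro k
    induction k with
    | zero =>
      intro f
      rw [pow_one]
      exact hT f
    | succ k ih =>
      intro f
      -- integrability of the triple product, for a.e. x
      have hfae := Lp.aestronglyMeasurable f
      have hf2 : MemLp (⇑f) 2 μ := (Lp.memLp f).mono_exponent hp2
      have hK2 : MemLp (kpow μ W k) 2 ν :=
        MemLp.mono_exponent
          (show MemLp (kpow μ W k) p ν from ⟨(hKm k).aestronglyMeasurable, (hafin k).lt_top⟩)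
          hp2
      have hW2sec : ∀ᵐ x ∂μ, MemLp (fun z => W (z, x)) 2 μ :=
        lint_sections_left two_ne_zero ENNReal.ofNat_ne_top hmeas (hW.mono_exponent hp2).2.ne
      have htwo : ((2 : ℝ≥0∞).toReal) = (2:ℝ) := by simp
      set A : ℝ≥0∞ := (∫⁻ y, (‖f y‖₊ : ℝ≥0∞) ^ (2:ℝ) ∂μ) ^ (1/(2:ℝ)) with hA
      have hAfin : A ≠ ∞ := by
        have h2 := hf2.2.ne
        rw [eLpNorm_eq_lintegral_rpow_nnnorm two_ne_zero ENNReal.ofNat_ne_top, htwo] at h2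
        exact h2
      have hconj : (2:ℝ).HolderConjugate 2 := Real.HolderConjugate.two_two
      set K : Ω × Ω → ℝ≥0∞ := fun yz => (‖kpow μ W k yz‖₊ : ℝ≥0∞) with hK
      have hKmm : Measurable K := (hKm k).enorm
      have hBmeas : Measurable fun z => (∫⁻ y, K (y, z) ^ (2:ℝ) ∂μ) ^ (1/(2:ℝ)) :=
        ((hKmm.pow_const (2:ℝ)).lintegral_prod_left').pow_const _
      have hKint : ∫⁻ z, ∫⁻ y, K (y, z) ^ (2:ℝ) ∂μ ∂μ ≠ ∞ := by
        have hsw : ∫⁻ z, ∫⁻ y, K (y, z) ^ (2:ℝ) ∂μ ∂μ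
            = ∫⁻ s, K s ^ (2:ℝ) ∂ν :=
          (lintegral_prod_symm _ ((hKmm.pow_const (2:ℝ))).aemeasurable).symm
        rw [hsw]
        have h2 := hK2.2.ne
        rw [eLpNorm_eq_lintegral_rpow_nnnorm two_ne_zero ENNReal.ofNat_ne_top, htwo] at h2
        exact rpow_ne_top (by norm_num) h2
      have hint : ∀ᵐ x ∂μ, Integrable (fun zy : Ω × Ω =>
          f zy.2 * ((kpow μ W k (zy.2, zy.1) : ℝ) : ℂ) * ((W (zy.1, x) : ℝ) : ℂ)) ν := by
        filter_upwards [hW2sec] with x hx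
        have hWx : ∫⁻ z, (‖W (z, x)‖₊ : ℝ≥0∞) ^ (2:ℝ) ∂μ ≠ ∞ := by
          have h2 := hx.2.ne
          rw [eLpNorm_eq_lintegral_rpow_nnnorm two_ne_zero ENNReal.ofNat_ne_top, htwo] at h2
          exact rpow_ne_top (by norm_num) h2
        constructor
        · refine AEStronglyMeasurable.mul (AEStronglyMeasurable.mul hfae.comp_snd ?_) ?_
          · exact (Complex.measurable_ofReal.comp
              ((hKm k).comp measurable_swap)).aestronglyMeasurable
          · exact (Complex.measurable_ofReal.comp
              (hmeas.comp (measurable_fst.prodMk measurable_const))).aestronglyMeasurable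
        · show (∫⁻ zy, (‖_‖₊ : ℝ≥0∞) ∂ν) < ∞
          have e0 : ∀ zy : Ω × Ω,
              (‖f zy.2 * ((kpow μ W k (zy.2, zy.1) : ℝ) : ℂ) * ((W (zy.1, x) : ℝ) : ℂ)‖₊ : ℝ≥0∞)
              = (‖f zy.2‖₊ : ℝ≥0∞) * K (zy.2, zy.1) * (‖W (zy.1, x)‖₊ : ℝ≥0∞) := by
            intro zy
            simp [nnnorm_mul, Complex.nnnorm_real, hK]
          have emeas : AEMeasurable (fun zy : Ω × Ω =>
              (‖f zy.2‖₊ : ℝ≥0∞) * K (zy.2, zy.1) * (‖W (zy.1, x)‖₊ : ℝ≥0∞)) ν := by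
            refine AEMeasurable.fun_mul (AEMeasurable.fun_mul ?_ ?_) ?_
            · exact hfae.comp_snd.enorm
            · exact (hKmm.comp measurable_swap).aemeasurable
            · exact ((hmeas.comp (measurable_fst.prodMk measurable_const)).enorm).aemeasurable
          calc ∫⁻ zy, (‖f zy.2 * ((kpow μ W k (zy.2, zy.1) : ℝ) : ℂ)
                  * ((W (zy.1, x) : ℝ) : ℂ)‖₊ : ℝ≥0∞) ∂ν
              = ∫⁻ z, ∫⁻ y, (‖f y‖₊ : ℝ≥0∞) * K (y, z) * (‖W (z, x)‖₊ : ℝ≥0∞) ∂μ ∂μ := by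
                simp_rw [e0]
                exact lintegral_prod _ emeas
            _ = ∫⁻ z, (∫⁻ y, (‖f y‖₊ : ℝ≥0∞) * K (y, z) ∂μ) * (‖W (z, x)‖₊ : ℝ≥0∞) ∂μ := by
                refine lintegral_congr fun z => ?_
                exact lintegral_mul_const'' _
                  (hfae.enorm.mul (hKmm.comp (measurable_prodMk_right)).aemeasurable)
            _ ≤ ∫⁻ z, (A * (∫⁻ y, K (y, z) ^ (2:ℝ) ∂μ) ^ (1/(2:ℝ)))
                  * (‖W (z, x)‖₊ : ℝ≥0∞) ∂μ := by
                refine lintegral_mono fun z => ?_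
                gcongr
                exact ENNReal.lintegral_mul_le_Lp_mul_Lq μ hconj hfae.enorm
                  (hKmm.comp (measurable_prodMk_right)).aemeasurable
            _ = A * ∫⁻ z, (∫⁻ y, K (y, z) ^ (2:ℝ) ∂μ) ^ (1/(2:ℝ))
                  * (‖W (z, x)‖₊ : ℝ≥0∞) ∂μ := by
                simp_rw [mul_assoc]
                exact lintegral_const_mul' _ _ hAfin
            _ ≤ A * ((∫⁻ z, ((∫⁻ y, K (y, z) ^ (2:ℝ) ∂μ) ^ (1/(2:ℝ))) ^ (2:ℝ) ∂μ) ^ (1/(2:ℝ))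
                  * (∫⁻ z, (‖W (z, x)‖₊ : ℝ≥0∞) ^ (2:ℝ) ∂μ) ^ (1/(2:ℝ))) := by
                gcongr
                exact ENNReal.lintegral_mul_le_Lp_mul_Lq μ hconj hBmeas.aemeasurable
                  (hmeas.comp (measurable_prodMk_right)).enorm.aemeasurable
            _ < ∞ := by
                have col : ∀ (a : ℝ≥0∞), (a ^ (1/(2:ℝ))) ^ (2:ℝ) = a := by
                  intro a
                  rw [← ENNReal.rpow_mul, one_div, inv_mul_cancel₀ (by norm_num : (2:ℝ) ≠ 0),
                    ENNReal.rpow_one]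
                simp_rw [col]
                refine ENNReal.mul_lt_top hAfin.lt_top ?_
                refine ENNReal.mul_lt_top ?_ ?_
                · exact (ENNReal.rpow_lt_top_of_nonneg (by norm_num) hKint)
                · exact (ENNReal.rpow_lt_top_of_nonneg (by norm_num) hWx)
      filter_upwards [hT ((T ^ (k+1)) f), hint] with x hx1 hx2
      have h1 : (T ^ (k+1+1)) f = T ((T ^ (k+1)) f) := by rw [pow_succ']; rfl
      rw [h1, hx1]
      have h2 : ∫ z, ((T ^ (k+1)) f) z * ((W (z, x) : ℝ) : ℂ) ∂μ
          = ∫ z, (∫ y, f y * ((kpow μ W k (y, z) : ℝ) : ℂ) ∂μ) * ((W (z, x) : ℝ) : ℂ) ∂μ := by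
        refine integral_congr_ae ?_
        filter_upwards [ih f] with z hz
        rw [hz]
      rw [h2]
      have h3 : ∀ z : Ω, (∫ y, f y * ((kpow μ W k (y, z) : ℝ) : ℂ) ∂μ) * ((W (z, x) : ℝ) : ℂ)
          = ∫ y, f y * ((kpow μ W k (y, z) : ℝ) : ℂ) * ((W (z, x) : ℝ) : ℂ) ∂μ := fun z =>
        (integral_mul_const _ _).symm
      simp_rw [h3]
      rw [integral_integral_swap hx2]
      refine integral_congr_ae (Eventually.of_forall fun y => ?_)
      calc ∫ z, f y * ((kpow μ W k (y, z) : ℝ) : ℂ) * ((W (z, x) : ℝ) : ℂ) ∂μ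
          = f y * ∫ z, ((kpow μ W k (y, z) : ℝ) : ℂ) * ((W (z, x) : ℝ) : ℂ) ∂μ := by
            simp_rw [mul_assoc]
            exact integral_const_mul _ _
        _ = f y * ((kpow μ W (k+1) (y, x) : ℝ) : ℂ) := by
            congr 1
            show _ = ((∫ z, kpow μ W k (y, z) * W (z, x) ∂μ : ℝ) : ℂ)
            have hz : ∀ z, ((kpow μ W k (y, z) : ℝ) : ℂ) * ((W (z, x) : ℝ) : ℂ)
                = (((kpow μ W k (y, z) * W (z, x) : ℝ)) : ℂ) := by
              intro z; push_cast; ring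
            simp_rw [hz]
            exact integral_ofReal
  -- lower bound : operator norms bounded by kernel norms
  have hA : ∀ k : ℕ, (‖(T ^ (k+1) : Lp ℂ p μ →L[ℂ] Lp ℂ p μ)‖₊ : ℝ≥0∞)
      ≤ eLpNorm (kpow μ W k) p ν := by
    intro k
    set a := eLpNorm (kpow μ W k) p ν with ha
    have collapse : ∀ (b : ℝ≥0∞), (b ^ (1/q)) ^ q = b := by
      intro b
      rw [← ENNReal.rpow_mul, one_div, inv_mul_cancel₀ hq0.ne', ENNReal.rpow_one]
    have hq1 : (1:ℝ) < q := lt_of_lt_of_le one_lt_two hq2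
    set p' : ℝ := q / (q - 1) with hp'def
    have hconj : p'.HolderConjugate q := (Real.HolderConjugate.conjExponent hq1).symm
    have hp'pos : 0 < p' := hconj.pos
    have hp'le : ENNReal.ofReal p' ≤ p := by
      have h2 : p' ≤ 2 := by
        rw [hp'def, div_le_iff₀ (by linarith)]
        linarith
      calc ENNReal.ofReal p' ≤ ENNReal.ofReal 2 := ENNReal.ofReal_le_ofReal h2
        _ = 2 := by norm_num
        _ ≤ p := hp2
    have key : ∀ f : Lp ℂ p μ,
        eLpNorm (⇑((T ^ (k+1)) f)) p μ ≤ a * (‖f‖₊ : ℝ≥0∞) := by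
      intro f
      rw [eLpNorm_congr_ae (hR k f)]
      have hsectm : ∀ x : Ω, Measurable fun y => kpow μ W k (y, x) := fun x =>
        (hKm k).comp measurable_prodMk_right
      have hpt : ∀ x : Ω, (‖∫ y, f y * ((kpow μ W k (y, x) : ℝ) : ℂ) ∂μ‖₊ : ℝ≥0∞)
          ≤ (‖f‖₊ : ℝ≥0∞) * (∫⁻ y, (‖kpow μ W k (y, x)‖₊ : ℝ≥0∞) ^ q ∂μ) ^ (1/q) := by
        intro x
        refine le_trans (enorm_integral_le_lintegral_enorm _) ?_
        have step : ∫⁻ y, (‖f y * ((kpow μ W k (y, x) : ℝ) : ℂ)‖₊ : ℝ≥0∞) ∂μ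
            ≤ (∫⁻ y, (‖f y‖₊ : ℝ≥0∞) ^ p' ∂μ) ^ (1/p')
              * (∫⁻ y, (‖kpow μ W k (y, x)‖₊ : ℝ≥0∞) ^ q ∂μ) ^ (1/q) := by
          have h := ENNReal.lintegral_mul_le_Lp_mul_Lq μ hconj
            (Lp.aestronglyMeasurable f).enorm ((hsectm x).enorm).aemeasurable
          refine le_trans (le_of_eq ?_) h
          refine lintegral_congr fun y => ?_
          simp [nnnorm_mul, Complex.nnnorm_real]
          rfl
        refine step.trans ?_
        gcongr
        have e1 : (∫⁻ y, (‖f y‖₊ : ℝ≥0∞) ^ p' ∂μ) ^ (1/p')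
            = eLpNorm (⇑f) (ENNReal.ofReal p') μ := by
          rw [eLpNorm_eq_lintegral_rpow_nnnorm (by simp [ENNReal.ofReal_eq_zero, not_le, hp'pos])
            ENNReal.ofReal_ne_top, ENNReal.toReal_ofReal hp'pos.le]
        rw [e1, enorm_Lp f]
        exact eLpNorm_le_eLpNorm_of_exponent_le hp'le (Lp.aestronglyMeasurable f)
      calc eLpNorm (fun x => ∫ y, f y * ((kpow μ W k (y, x) : ℝ) : ℂ) ∂μ) p μ
          = (∫⁻ x, (‖∫ y, f y * ((kpow μ W k (y, x) : ℝ) : ℂ) ∂μ‖₊ : ℝ≥0∞) ^ q ∂μ) ^ (1/q) :=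
            eLpNorm_eq_lintegral_rpow_nnnorm hp0 hptop
        _ ≤ (∫⁻ x, ((‖f‖₊ : ℝ≥0∞)
              * (∫⁻ y, (‖kpow μ W k (y, x)‖₊ : ℝ≥0∞) ^ q ∂μ) ^ (1/q)) ^ q ∂μ) ^ (1/q) := by
            gcongr with x
            exact hpt x
        _ = (‖f‖₊ : ℝ≥0∞)
              * (∫⁻ x, ∫⁻ y, (‖kpow μ W k (y, x)‖₊ : ℝ≥0∞) ^ q ∂μ ∂μ) ^ (1/q) := by
            simp_rw [ENNReal.mul_rpow_of_nonneg _ _ hq0.le, collapse]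
            rw [lintegral_const_mul' _ _
              (ENNReal.rpow_ne_top_of_nonneg hq0.le ENNReal.coe_ne_top),
              ENNReal.mul_rpow_of_nonneg _ _ (by positivity), ← ENNReal.rpow_mul,
              mul_one_div_cancel hq0.ne', ENNReal.rpow_one]
        _ = a * (‖f‖₊ : ℝ≥0∞) := by
            have hsw : ∫⁻ x, ∫⁻ y, (‖kpow μ W k (y, x)‖₊ : ℝ≥0∞) ^ q ∂μ ∂μ
                = ∫⁻ s, (‖kpow μ W k s‖₊ : ℝ≥0∞) ^ q ∂ν :=
              (lintegral_prod_symm _ ((hKm k).enorm.pow_const q).aemeasurable).symm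
            rw [hsw, ha, eLpNorm_eq_lintegral_rpow_nnnorm hp0 hptop, mul_comm]
    have hbound : ‖(T ^ (k+1) : Lp ℂ p μ →L[ℂ] Lp ℂ p μ)‖ ≤ a.toReal := by
      refine ContinuousLinearMap.opNorm_le_bound _ ENNReal.toReal_nonneg fun f => ?_
      have h1 := key f
      rw [← enorm_Lp ((T ^ (k+1)) f)] at h1
      have h2 := ENNReal.toReal_mono
        (ENNReal.mul_ne_top (hafin k) ENNReal.coe_ne_top) h1
      simpa [ENNReal.toReal_mul, coe_nnnorm] using h2
    calc (‖(T ^ (k+1) : Lp ℂ p μ →L[ℂ] Lp ℂ p μ)‖₊ : ℝ≥0∞)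
        = ENNReal.ofReal ‖(T ^ (k+1) : Lp ℂ p μ →L[ℂ] Lp ℂ p μ)‖ :=
          (ofReal_norm _).symm
      _ ≤ ENNReal.ofReal a.toReal := ENNReal.ofReal_le_ofReal hbound
      _ ≤ a := ENNReal.ofReal_toReal_le
  -- Glue : squeeze between the two Gelfand-type limits
  have he : ∀ k : ℕ, (0:ℝ) < ((k:ℝ)+1)⁻¹ := fun k => by positivity
  by_cases hC0 : C = 0
  · -- degenerate case : `W = 0` a.e., so `T = 0`
    have hz : ∀ k : ℕ, eLpNorm (kpow μ W k) p ν = 0 := fun k =>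
      le_antisymm (by simpa [hC0] using hab k) zero_le
    have hT0 : T = 0 := by
      have h1 := hA 0
      rw [pow_one, hz 0] at h1
      have h2 : ‖T‖ = 0 := by
        have := le_antisymm h1 zero_le
        simpa [← ofReal_norm] using this
      exact (ContinuousLinearMap.opNorm_zero_iff T).mp h2
    have hfun : (fun k : ℕ => eLpNorm (kpow μ W k) p ν ^ (((k:ℝ)+1)⁻¹))
        = fun _ => (0:ℝ≥0∞) := by
      funext k
      rw [hz k, ENNReal.zero_rpow_of_pos (he k)]
    rw [hfun, hT0, spectrum.spectralRadius_zero]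
    exact tendsto_const_nhds
  · set ρ := spectralRadius ℂ T with hρ
    have hρfin : ρ ≠ ∞ := by
      have h := spectrum.spectralRadius_le_pow_nnnorm_pow_one_div ℂ T 0
      simp only [pow_one, Nat.cast_zero, zero_add, div_one, ENNReal.rpow_one] at h
      exact (h.trans_lt (ENNReal.mul_lt_top ENNReal.coe_lt_top ENNReal.coe_lt_top)).ne
    have hGel := spectrum.pow_nnnorm_pow_one_div_tendsto_nhds_spectralRadius T
    have hlow : Tendsto (fun k : ℕ =>
        (‖(T ^ (k+1) : Lp ℂ p μ →L[ℂ] Lp ℂ p μ)‖₊ : ℝ≥0∞) ^ (((k:ℝ)+1)⁻¹)) atTop (𝓝 ρ) := by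
      have h := hGel.comp (tendsto_add_atTop_nat 1)
      refine h.congr fun k => ?_
      simp only [Function.comp_apply]
      congr 1
      push_cast
      rw [one_div]
    -- the exponent-shifted Gelfand limit for `‖T^k‖`
    have hu : Tendsto (fun k : ℕ =>
        (‖(T ^ k : Lp ℂ p μ →L[ℂ] Lp ℂ p μ)‖₊ : ℝ≥0∞) ^ (((k:ℝ)+1)⁻¹)) atTop (𝓝 ρ) := by
      set t : ℕ → ℝ := fun k => ‖(T ^ k : Lp ℂ p μ →L[ℂ] Lp ℂ p μ)‖ with ht
      set s : ℕ → ℝ := fun k => t k ^ (1/(k:ℝ)) with hs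
      have hsnn : ∀ k, 0 ≤ s k := fun k => Real.rpow_nonneg (norm_nonneg _) _
      have hsl : Tendsto s atTop (𝓝 ρ.toReal) := by
        have h1 := (ENNReal.tendsto_toReal hρfin).comp hGel
        refine h1.congr fun k => ?_
        simp only [Function.comp_apply]
        rw [← ENNReal.toReal_rpow, ENNReal.coe_toReal, coe_nnnorm]
      have hm : Tendsto (fun k : ℕ => (k:ℝ)/((k:ℝ)+1)) atTop (𝓝 1) := by
        have h0 : Tendsto (fun k : ℕ => 1 - 1/((k:ℝ)+1)) atTop (𝓝 (1 - 0)) :=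
          tendsto_const_nhds.sub tendsto_one_div_add_atTop_nhds_zero_nat
        rw [sub_zero] at h0
        refine h0.congr fun k => ?_
        have hk : ((k:ℝ)+1) ≠ 0 := by positivity
        field_simp
        ring
      have hj : Tendsto (fun k : ℕ => s k ^ ((k:ℝ)/((k:ℝ)+1))) atTop
          (𝓝 (ρ.toReal ^ (1:ℝ))) := by
        have hc : ContinuousAt (fun r : ℝ × ℝ => r.1 ^ r.2) (ρ.toReal, 1) :=
          Real.continuousAt_rpow _ (Or.inr one_pos)
        exact hc.tendsto.comp (hsl.prodMk_nhds hm)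
      rw [Real.rpow_one] at hj
      have hof : Tendsto (fun k : ℕ => ENNReal.ofReal (s k ^ ((k:ℝ)/((k:ℝ)+1)))) atTop (𝓝 ρ) := by
        have := ENNReal.tendsto_ofReal hj
        rwa [ENNReal.ofReal_toReal hρfin] at this
      refine hof.congr' ?_
      filter_upwards [eventually_ge_atTop 1] with k hk
      have hk0 : (k:ℝ) ≠ 0 := by
        simp only [ne_eq, Nat.cast_eq_zero]
        omega
      have e1 : s k ^ ((k:ℝ)/((k:ℝ)+1)) = t k ^ (((k:ℝ)+1)⁻¹) := by
        rw [hs, ← Real.rpow_mul (norm_nonneg _)]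
        congr 1
        field_simp
      rw [e1, ht]
      rw [← ENNReal.ofReal_rpow_of_nonneg (norm_nonneg _) (he k).le,
        ofReal_norm]
      rfl
    have hCto : Tendsto (fun k : ℕ => C ^ (((k:ℝ)+1)⁻¹)) atTop (𝓝 1) := by
      have hCr0 : C.toReal ≠ 0 := by
        simp [ENNReal.toReal_eq_zero_iff, hC0, hCfin]
      have hek : Tendsto (fun k : ℕ => ((k:ℝ)+1)⁻¹) atTop (𝓝 0) := by
        have := tendsto_one_div_add_atTop_nhds_zero_nat (𝕜 := ℝ)
        simpa [one_div] using this
      have hc : ContinuousAt (fun r : ℝ × ℝ => r.1 ^ r.2) (C.toReal, 0) :=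
        Real.continuousAt_rpow _ (Or.inl hCr0)
      have hj : Tendsto (fun k : ℕ => C.toReal ^ (((k:ℝ)+1)⁻¹)) atTop
          (𝓝 (C.toReal ^ (0:ℝ))) :=
        hc.tendsto.comp (tendsto_const_nhds.prodMk_nhds hek)
      rw [Real.rpow_zero] at hj
      have := ENNReal.tendsto_ofReal hj
      rw [ENNReal.ofReal_one] at this
      refine this.congr fun k => ?_
      rw [ENNReal.toReal_rpow, ENNReal.ofReal_toReal]
      exact ENNReal.rpow_ne_top_of_nonneg (he k).le hCfin
    have hupp : Tendsto (fun k : ℕ =>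
        ((‖(T ^ k : Lp ℂ p μ →L[ℂ] Lp ℂ p μ)‖₊ : ℝ≥0∞) * C) ^ (((k:ℝ)+1)⁻¹)) atTop (𝓝 ρ) := by
      have h := ENNReal.Tendsto.mul hu (Or.inr one_ne_top) hCto (Or.inr hρfin)
      rw [mul_one] at h
      refine h.congr fun k => ?_
      rw [ENNReal.mul_rpow_of_nonneg _ _ (he k).le]
    refine tendsto_of_tendsto_of_tendsto_of_le_of_le hlow hupp ?_ ?_
    · intro k
      exact ENNReal.rpow_le_rpow (hA k) (he k).le
    · intro k
      exact ENNReal.rpow_le_rpow (hab k) (he k).le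
end
end
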